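/- arXiv:1109.6517 — 11 statements merged into one kernel-verified Lean document; each statement's English description precedes it below -/
import Mathlib

section
/- Let X be a Lindelöf topological space such that every point x has an open neighborhood U(x) admitting a point-countable p-metabase. Then X itself has a point-countable p-metabase. -/
open Topology Set

/-- `𝒜` is a p-metabase for `X`: all members are open, and for distinct `x, y`
there is a finite subfamily `F ⊆ 𝒜` with `x ∈ interior (⋃₀ F)` and `⋃₀ F ⊆ X \ {y}`. -/
def IsPMetabase (X : Type*) [TopologicalSpace X] (𝒜 : Set (Set X)) : Prop :=
  (∀ A ∈ 𝒜, IsOpen A) ∧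
  ∀ x y : X, x ≠ y → ∃ F : Finset (Set X), ↑F ⊆ 𝒜 ∧
    x ∈ interior (⋃₀ (F : Set (Set X))) ∧ ⋃₀ (F : Set (Set X)) ⊆ {y}ᶜ

/-- `𝒜` is point-countable: each point lies in at most countably many members. -/
def PointCountable {X : Type*} (𝒜 : Set (Set X)) : Prop :=
  ∀ x : X, {A ∈ 𝒜 | x ∈ A}.Countable

theorem lindelof_locally_pMetabase {X : Type*} [TopologicalSpace X] [LindelofSpace X]
    (h : ∀ x : X, ∃ U : Set X, IsOpen U ∧ x ∈ U ∧
      ∃ 𝒜 : Set (Set ↥U), IsPMetabase ↥U 𝒜 ∧ PointCountable 𝒜) :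
    ∃ 𝒜 : Set (Set X), IsPMetabase X 𝒜 ∧ PointCountable 𝒜 := by
  classical
  choose U hUopen hxU 𝒜 h𝒜 hpc using h
  have hcov : (univ : Set X) ⊆ ⋃ i, U i := fun x _ => mem_iUnion.2 ⟨x, hxU x⟩
  obtain ⟨t, htc, htcov⟩ := isLindelof_univ.elim_countable_subcover U hUopen hcov
  set ℬ : Set (Set X) :=
    (⋃ i ∈ t, (Set.image (Subtype.val : ↥(U i) → X)) '' (𝒜 i)) ∪ ((fun i => U i) '' t)
    with hℬ
  have himg_open : ∀ i ∈ t, ∀ B ∈ 𝒜 i, IsOpen (Subtype.val '' B) := by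
    intro i _ B hB
    exact (hUopen i).isOpenMap_subtype_val B ((h𝒜 i).1 B hB)
  refine ⟨ℬ, ⟨?_, ?_⟩, ?_⟩
  · -- openness
    intro A hA
    rcases hA with hA | ⟨i, hi, rfl⟩
    · simp only [mem_iUnion] at hA
      obtain ⟨i, hi, B, hB, rfl⟩ := hA
      exact himg_open i hi B hB
    · exact hUopen i
  · -- p-metabase property
    intro x y hxy
    have : x ∈ ⋃ i ∈ t, U i := htcov (mem_univ x)
    simp only [mem_iUnion] at this
    obtain ⟨i, hit, hxi⟩ := this
    by_cases hyi : y ∈ U i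
    · have hne : (⟨x, hxi⟩ : ↥(U i)) ≠ ⟨y, hyi⟩ := by
        intro hEq; exact hxy (congrArg Subtype.val hEq)
      obtain ⟨F', hF'sub, hxint, hF'y⟩ := (h𝒜 i).2 _ _ hne
      refine ⟨F'.image (Set.image Subtype.val), ?_, ?_, ?_⟩
      · intro A hA
        simp only [Finset.coe_image, mem_image] at hA
        obtain ⟨B, hB, rfl⟩ := hA
        exact Or.inl (mem_iUnion.2 ⟨i, mem_iUnion.2 ⟨hit, ⟨B, hF'sub hB, rfl⟩⟩⟩)
      all_goals
        have hkey : ⋃₀ ((F'.image (Set.image Subtype.val) : Finset (Set X)) : Set (Set X))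
            = Subtype.val '' ⋃₀ (F' : Set (Set ↥(U i))) := by
          simp [Finset.coe_image, Set.sUnion_image, Set.image_sUnion]
        rw [hkey]
      · have hopen : IsOpen (Subtype.val '' interior (⋃₀ (F' : Set (Set ↥(U i))))) :=
          (hUopen i).isOpenMap_subtype_val _ isOpen_interior
        have hsub : Subtype.val '' interior (⋃₀ (F' : Set (Set ↥(U i))))
            ⊆ Subtype.val '' ⋃₀ (F' : Set (Set ↥(U i))) :=
          image_mono interior_subset
        exact interior_maximal hsub hopen (mem_image_of_mem _ hxint)
      · rintro z ⟨z', hz', rfl⟩ hz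
        have : z' = (⟨y, hyi⟩ : ↥(U i)) := Subtype.ext hz
        exact hF'y hz' (this ▸ rfl)
    · refine ⟨{U i}, ?_, ?_, ?_⟩
      · intro A hA
        simp only [Finset.coe_singleton, mem_singleton_iff] at hA
        exact Or.inr ⟨i, hit, hA.symm⟩
      · simpa [(hUopen i).interior_eq] using hxi
      · intro z hz hzy
        simp only [Finset.coe_singleton, sUnion_singleton] at hz
        rw [mem_singleton_iff] at hzy
        exact hyi (hzy ▸ hz)
  · -- point countable
    intro x
    have hsub : {A ∈ ℬ | x ∈ A} ⊆
        ((fun i => U i) '' t) ∪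
        ⋃ i ∈ t, (Set.image (Subtype.val : ↥(U i) → X)) ''
          {B ∈ 𝒜 i | ∃ h : x ∈ U i, (⟨x, h⟩ : ↥(U i)) ∈ B} := by
      rintro A ⟨hA, hxA⟩
      rcases hA with hA | hA
      · simp only [mem_iUnion] at hA
        obtain ⟨i, hi, B, hB, rfl⟩ := hA
        obtain ⟨x', hx'B, hx'⟩ := hxA
        have hxUi : x ∈ U i := hx' ▸ x'.2
        refine Or.inr (mem_iUnion.2 ⟨i, mem_iUnion.2 ⟨hi, ⟨B, ⟨hB, hxUi, ?_⟩, rfl⟩⟩⟩)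
        have hx'eq : (⟨x, hxUi⟩ : ↥(U i)) = x' := Subtype.ext hx'.symm
        exact hx'eq ▸ hx'B
      · exact Or.inl hA
    refine Set.Countable.mono hsub ?_
    refine (htc.image _).union ?_
    refine htc.biUnion fun i hi => Set.Countable.image ?_ _
    by_cases hx : x ∈ U i
    · have heq : {B ∈ 𝒜 i | ∃ h : x ∈ U i, (⟨x, h⟩ : ↥(U i)) ∈ B}
          = {B ∈ 𝒜 i | (⟨x, hx⟩ : ↥(U i)) ∈ B} := by
        ext B; simp [hx]
      rw [heq]; exact hpc i _
    · have heq : {B ∈ 𝒜 i | ∃ h : x ∈ U i, (⟨x, h⟩ : ↥(U i)) ∈ B} = ∅ := by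
        ext B; simp [hx]
      rw [heq]; exact countable_empty
end

section
/- If a topological space X has a point-countable p-metabase, then every countably compact subset of X is compact. -/
open Topology Set

/-- `K` is countably compact: every countable open cover of `K` has a finite subcover. -/
def CountablyCompactSet {X : Type*} [TopologicalSpace X] (K : Set X) : Prop :=
  ∀ U : ℕ → Set X, (∀ n, IsOpen (U n)) → K ⊆ ⋃ n, U n →
    ∃ s : Finset ℕ, K ⊆ ⋃ n ∈ s, U n

/-- The collection of finsets with elements from a countable set is countable. -/
lemma countable_finsets_subset {β : Type*} {s : Set β} (hs : s.Countable) :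
    {F : Finset β | ↑F ⊆ s}.Countable := by
  classical
  haveI := hs.to_subtype
  have hsub : {F : Finset β | ↑F ⊆ s} ⊆
      Set.range (fun t : Finset s => t.map (Function.Embedding.subtype _)) := by
    intro F hF
    exact ⟨F.subtype (· ∈ s), Finset.subtype_map_of_mem (fun x hx => hF hx)⟩
  exact (Set.countable_range _).mono hsub

theorem countablyCompact_isCompact_of_pMetabase {X : Type*} [TopologicalSpace X]
    (𝒜 : Set (Set X)) (h𝒜 : IsPMetabase X 𝒜) (hpc : PointCountable 𝒜)
    (K : Set X) (hK : CountablyCompactSet K) : IsCompact K := by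
  classical
  have hopen : ∀ A ∈ 𝒜, IsOpen A := h𝒜.1
  -- 𝒜 is a T₁-separating family
  have hsep : ∀ x y : X, x ≠ y → ∃ A ∈ 𝒜, x ∈ A ∧ y ∉ A := by
    intro x y hxy
    obtain ⟨F, hF𝒜, hxint, hFy⟩ := h𝒜.2 x y hxy
    have hx : x ∈ ⋃₀ (F : Set (Set X)) := interior_subset hxint
    obtain ⟨A, hAF, hxA⟩ := hx
    refine ⟨A, hF𝒜 hAF, hxA, fun hyA => ?_⟩
    exact (hFy ⟨A, hAF, hyA⟩) rfl
  rcases K.eq_empty_or_nonempty with rfl | hKne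
  · exact isCompact_empty
  haveI : Nonempty X := ⟨hKne.some⟩
  apply isCompact_of_finite_subcover
  intro ι U hUopen hKcov
  by_contra hnofin
  push_neg at hnofin
  -- the base family: complements (in K) of "small" open sets
  set B0 : Set (Set X) :=
    {T | ∃ O : Set X, IsOpen O ∧ (∃ t : Finset ι, O ∩ K ⊆ ⋃ i ∈ t, U i) ∧ T = K \ O}
    with hB0def
  -- the lattice of trace-closed sets
  set L : Set (Set X) := {T | ∃ O : Set X, IsOpen O ∧ T = K \ O} with hLdef
  have hB0L : B0 ⊆ L := by
    rintro T ⟨O, hO, _, rfl⟩; exact ⟨O, hO, rfl⟩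
  -- B0 has the finite intersection property
  have hB0fip : ∀ t : Finset (Set X), ↑t ⊆ B0 →
      (⋂₀ (t : Set (Set X))).Nonempty := by
    have key : ∀ t : Finset (Set X), ↑t ⊆ B0 →
        ∃ s : Finset ι, K \ (⋃ i ∈ s, U i) ⊆ ⋂₀ (t : Set (Set X)) := by
      intro t ht
      induction t using Finset.induction_on with
      | empty => exact ⟨∅, by simp⟩
      | insert =>
        rename_i T t' hnotmem ih
        have hT : T ∈ B0 := ht (Finset.mem_insert_self T t')
        obtain ⟨O, hOopen, ⟨sT, hsT⟩, rfl⟩ := hT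
        obtain ⟨s', hs'⟩ := ih (fun x hx => ht (Finset.mem_insert_of_mem hx))
        refine ⟨sT ∪ s', ?_⟩
        intro x hx
        have hxK : x ∈ K := hx.1
        have hxnot : x ∉ ⋃ i ∈ sT ∪ s', U i := hx.2
        rw [Finset.coe_insert, Set.sInter_insert]
        constructor
        · refine ⟨hxK, fun hxO => ?_⟩
          have hmem : x ∈ ⋃ i ∈ sT, U i := hsT ⟨hxO, hxK⟩
          apply hxnot
          simp only [Finset.mem_union, Set.mem_iUnion, exists_prop] at hmem ⊢
          obtain ⟨i, hi, hxi⟩ := hmem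
          exact ⟨i, Or.inl hi, hxi⟩
        · apply hs'
          refine ⟨hxK, fun hc => hxnot ?_⟩
          simp only [Finset.mem_union, Set.mem_iUnion, exists_prop] at hc ⊢
          obtain ⟨i, hi, hxi⟩ := hc
          exact ⟨i, Or.inr hi, hxi⟩
    intro t ht
    obtain ⟨s, hs⟩ := key t ht
    have hns : ¬ K ⊆ ⋃ i ∈ s, U i := hnofin s
    rw [Set.not_subset] at hns
    obtain ⟨x, hxK, hxn⟩ := hns
    exact ⟨x, hs ⟨hxK, hxn⟩⟩
  -- Zorn: a maximal FIP family containing B0 inside L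
  set S : Set (Set (Set X)) := {G | B0 ⊆ G ∧ G ⊆ L ∧
    ∀ t : Finset (Set X), ↑t ⊆ G → (⋂₀ (t : Set (Set X))).Nonempty} with hSdef
  have hB0S : B0 ∈ S := ⟨Set.Subset.rfl, hB0L, hB0fip⟩
  have hchainS : ∀ c ⊆ S, IsChain (· ⊆ ·) c → c.Nonempty →
      ∃ ub ∈ S, ∀ s ∈ c, s ⊆ ub := by
    intro c hcS hchain hcne
    refine ⟨⋃₀ c, ⟨?_, ?_, ?_⟩, fun s hs => Set.subset_sUnion_of_mem hs⟩
    · obtain ⟨g, hg⟩ := hcne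
      exact (hcS hg).1.trans (Set.subset_sUnion_of_mem hg)
    · intro T hT
      obtain ⟨g, hgc, hTg⟩ := hT
      exact (hcS hgc).2.1 hTg
    · intro t ht
      have hone : ∃ g ∈ c, ↑t ⊆ g := by
        induction t using Finset.induction_on with
        | empty =>
          obtain ⟨g, hg⟩ := hcne
          exact ⟨g, hg, by simp⟩
        | insert =>
          rename_i T t' hnotmem ih
          obtain ⟨g₁, hg₁c, hg₁⟩ := ih (fun x hx => ht (Finset.mem_insert_of_mem hx))
          have hT : T ∈ ⋃₀ c := ht (Finset.mem_insert_self T t')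
          obtain ⟨g₂, hg₂c, hTg₂⟩ := hT
          rcases hchain.total hg₁c hg₂c with h | h
          · refine ⟨g₂, hg₂c, ?_⟩
            rw [Finset.coe_insert]
            exact Set.insert_subset hTg₂ (hg₁.trans h)
          · refine ⟨g₁, hg₁c, ?_⟩
            rw [Finset.coe_insert]
            exact Set.insert_subset (h hTg₂) hg₁
      obtain ⟨g, hgc, hgsub⟩ := hone
      exact (hcS hgc).2.2 t hgsub
  obtain ⟨G, hB0G, hGS, hGmax⟩ : ∃ G, B0 ⊆ G ∧ G ∈ S ∧ ∀ a ∈ S, G ⊆ a → a = G := by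
    obtain ⟨G, hBG, hGmax⟩ := zorn_subset_nonempty S hchainS B0 hB0S
    exact ⟨G, hBG, hGmax.prop, fun a haS hGa => hGmax.eq_of_ge haS hGa⟩
  obtain ⟨-, hGL, hGF⟩ := hGS
  -- basic properties of G
  have hGne : ∀ T ∈ G, T.Nonempty := by
    intro T hT
    have := hGF {T} (by simpa using hT)
    simpa using this
  have hGsubK : ∀ T ∈ G, T ⊆ K := by
    intro T hT
    obtain ⟨O, _, rfl⟩ := hGL hT
    exact Set.diff_subset
  -- countable FIP from countable compactness
  have sigmaFIP : ∀ C : ℕ → Set X, (∀ n, ∃ O, IsOpen O ∧ C n = K \ O) →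
      (∀ s : Finset ℕ, (⋂ n ∈ s, C n).Nonempty) → (⋂ n, C n).Nonempty := by
    intro C hCL hfip
    by_contra hempty
    rw [Set.not_nonempty_iff_eq_empty] at hempty
    choose O hOopen hCO using hCL
    have hcov : K ⊆ ⋃ n, O n := by
      intro k hk
      by_contra hknot
      have hkC : k ∈ ⋂ n, C n := by
        refine Set.mem_iInter.2 fun n => ?_
        rw [hCO n]
        exact ⟨hk, fun hkO => hknot (Set.mem_iUnion.2 ⟨n, hkO⟩)⟩
      rw [hempty] at hkC
      exact hkC
    obtain ⟨s, hs⟩ := hK O hOopen hcov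
    obtain ⟨w, hw⟩ := hfip (insert 0 s)
    have hwK : w ∈ K := by
      have hw0 : w ∈ C 0 := Set.mem_iInter₂.1 hw 0 (Finset.mem_insert_self 0 s)
      rw [hCO 0] at hw0
      exact hw0.1
    obtain ⟨n, hns, hwn⟩ := Set.mem_iUnion₂.1 (hs hwK)
    have hwC : w ∈ C n := Set.mem_iInter₂.1 hw n (Finset.mem_insert_of_mem hns)
    rw [hCO n] at hwC
    exact hwC.2 hwn
  -- maximality: anything in L whose insertion keeps FIP is already in G
  have hmax_insert : ∀ T ∈ L,
      (∀ t : Finset (Set X), ↑t ⊆ insert T G → (⋂₀ (t : Set (Set X))).Nonempty) → T ∈ G := by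
    intro T hTL hfip
    have hins : insert T G ∈ S := by
      refine ⟨hB0G.trans (Set.subset_insert T G), ?_, hfip⟩
      exact Set.insert_subset hTL hGL
    have heq := hGmax _ hins (Set.subset_insert T G)
    rw [← heq]
    exact Set.mem_insert T G
  -- G is closed under countable intersections
  have hGsigma : ∀ C : ℕ → Set X, (∀ n, C n ∈ G) → (⋂ n, C n) ∈ G := by
    intro C hC
    have hTL : (⋂ n, C n) ∈ L := by
      have hCL : ∀ n, ∃ O, IsOpen O ∧ C n = K \ O := fun n => hGL (hC n)
      choose O hOopen hCO using hCL
      refine ⟨⋃ n, O n, isOpen_iUnion hOopen, ?_⟩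
      ext p
      simp only [Set.mem_iInter, Set.mem_diff, Set.mem_iUnion]
      constructor
      · intro h
        refine ⟨((hCO 0) ▸ h 0).1, ?_⟩
        rintro ⟨n, hn⟩
        exact ((hCO n) ▸ h n).2 hn
      · rintro ⟨hpK, hpn⟩ n
        rw [hCO n]
        exact ⟨hpK, fun h => hpn ⟨n, h⟩⟩
    apply hmax_insert _ hTL
    intro t ht
    set T' : Finset (Set X) := t.erase (⋂ n, C n) with hT'def
    have hT'G : (T' : Set (Set X)) ⊆ G := by
      intro A hA
      rw [hT'def] at hA
      simp only [Finset.coe_erase, Set.mem_diff, Finset.mem_coe] at hA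
      rcases ht hA.1 with h | h
      · exact absurd h hA.2
      · exact h
    set l : List (Set X) := T'.toList with hldef
    set C' : ℕ → Set X := fun n => if h : n < l.length then l.get ⟨n, h⟩ else C (n - l.length)
      with hC'def
    have hC'G : ∀ n, C' n ∈ G := by
      intro n
      rw [hC'def]
      by_cases h : n < l.length
      · simp only [h, dif_pos]
        apply hT'G
        rw [Finset.mem_coe, ← Finset.mem_toList]
        exact List.get_mem l ⟨n, h⟩
      · simp only [h, dif_neg, not_false_iff]
        exact hC _
    have hC'fip : ∀ s : Finset ℕ, (⋂ n ∈ s, C' n).Nonempty := by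
      intro s
      have himg : ↑(s.image C') ⊆ G := by
        intro A hA
        simp only [Finset.coe_image, Set.mem_image, Finset.mem_coe] at hA
        obtain ⟨n, _, rfl⟩ := hA
        exact hC'G n
      have hne := hGF (s.image C') himg
      rwa [Finset.coe_image, Set.sInter_image] at hne
    obtain ⟨w, hw⟩ := sigmaFIP C' (fun n => hGL (hC'G n)) hC'fip
    refine ⟨w, ?_⟩
    intro T hTt
    rw [Finset.mem_coe] at hTt
    by_cases hT : T = ⋂ n, C n
    · subst hT
      refine Set.mem_iInter.2 fun m => ?_
      have hm := Set.mem_iInter.1 hw (l.length + m)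
      rw [hC'def] at hm
      have hnot : ¬ (l.length + m < l.length) := by omega
      simp only [hnot, dif_neg, not_false_iff] at hm
      simpa [Nat.add_sub_cancel_left] using hm
    · have hTT' : T ∈ T' := Finset.mem_erase.2 ⟨hT, hTt⟩
      have hTl : T ∈ l := by rw [hldef, Finset.mem_toList]; exact hTT'
      obtain ⟨i, hi⟩ := List.get_of_mem hTl
      have hmem := Set.mem_iInter.1 hw i.1
      have hlt : i.1 < l.length := i.2
      have heq : C' i.1 = T := by
        rw [hC'def]
        simp only [hlt, dif_pos]
        rw [show (⟨i.1, hlt⟩ : Fin l.length) = i from Fin.ext rfl, hi]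
      rwa [heq] at hmem
  -- K ∈ G
  have hKG : K ∈ G := by
    apply hmax_insert K ⟨∅, isOpen_empty, by simp⟩
    intro t ht
    set T' : Finset (Set X) := t.erase K with hT'def
    have hT'G : (T' : Set (Set X)) ⊆ G := by
      intro A hA
      rw [hT'def] at hA
      simp only [Finset.coe_erase, Set.mem_diff, Finset.mem_coe] at hA
      rcases ht hA.1 with h | h
      · exact absurd h hA.2
      · exact h
    rcases T'.eq_empty_or_nonempty with hT'e | hT'ne
    · have hall : ∀ T ∈ t, T = K := by
        intro T hTt
        by_contra hTK
        have : T ∈ T' := Finset.mem_erase.2 ⟨hTK, hTt⟩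
        rw [hT'e] at this
        exact absurd this (Finset.notMem_empty T)
      obtain ⟨k, hk⟩ := hKne
      refine ⟨k, fun T hTt => ?_⟩
      rw [Finset.mem_coe] at hTt
      rw [hall T hTt]
      exact hk
    · obtain ⟨w, hw⟩ := hGF T' hT'G
      refine ⟨w, fun T hTt => ?_⟩
      rw [Finset.mem_coe] at hTt
      by_cases hT : T = K
      · subst hT
        obtain ⟨T₀, hT₀⟩ := hT'ne
        exact hGsubK T₀ (hT'G hT₀) (hw T₀ hT₀)
      · exact hw T (Finset.mem_erase.2 ⟨hT, hTt⟩)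
  -- binary intersections
  have hGbin : ∀ T₁ ∈ G, ∀ T₂ ∈ G, T₁ ∩ T₂ ∈ G := by
    intro T₁ h₁ T₂ h₂
    have : (⋂ n, (if n = 0 then T₁ else T₂)) ∈ G := by
      apply hGsigma
      intro n
      by_cases h : n = 0 <;> simp [h, h₁, h₂]
    have heq : (⋂ n, (if n = 0 then T₁ else T₂)) = T₁ ∩ T₂ := by
      ext p
      simp only [Set.mem_iInter, Set.mem_inter_iff]
      constructor
      · intro h
        have h0 := h 0
        have h1 := h 1
        simp at h0 h1
        exact ⟨h0, h1⟩
      · rintro ⟨hp1, hp2⟩ n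
        by_cases h : n = 0 <;> simp [h, hp1, hp2]
    rwa [heq] at this
  -- finite intersections of nonempty finsets
  have hGfin : ∀ t : Finset (Set X), t.Nonempty → ↑t ⊆ G → ⋂₀ (t : Set (Set X)) ∈ G := by
    intro t htne
    induction htne using Finset.Nonempty.cons_induction with
    | singleton a => intro h; simpa using h (Finset.mem_singleton_self a)
    | cons a t' hat' ht'ne ih =>
      intro h
      have ha : a ∈ G := h (Finset.mem_cons_self a t')
      have ht'sub : (t' : Set (Set X)) ⊆ G := fun x hx => h (Finset.mem_cons.2 (Or.inr hx))
      have : ⋂₀ (↑(Finset.cons a t' hat') : Set (Set X)) = a ∩ ⋂₀ (t' : Set (Set X)) := by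
        simp [Finset.coe_cons, Set.sInter_insert]
      rw [this]
      exact hGbin a ha _ (ih ht'sub)
  -- dichotomy: a non-null open set contains a member of G
  have hdich : ∀ R : Set X, IsOpen R → (K \ R) ∉ G → ∃ T ∈ G, T ⊆ R := by
    intro R hRopen hRG
    have hnotfip : ¬ (∀ t : Finset (Set X), ↑t ⊆ insert (K \ R) G →
        (⋂₀ (t : Set (Set X))).Nonempty) := by
      intro hfip
      exact hRG (hmax_insert _ ⟨R, hRopen, rfl⟩ hfip)
    push_neg at hnotfip
    obtain ⟨t, htsub, htempty⟩ := hnotfip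
    set T' : Finset (Set X) := t.erase (K \ R) with hT'def
    have hT'G : (T' : Set (Set X)) ⊆ G := by
      intro A hA
      rw [hT'def] at hA
      simp only [Finset.coe_erase, Set.mem_diff, Finset.mem_coe] at hA
      rcases htsub hA.1 with h | h
      · exact absurd h hA.2
      · exact h
    rcases T'.eq_empty_or_nonempty with hT'e | hT'ne
    · -- every member of t equals K \ R
      have hall : ∀ T ∈ t, T = K \ R := by
        intro T hTt
        by_contra hTK
        have : T ∈ T' := Finset.mem_erase.2 ⟨hTK, hTt⟩
        rw [hT'e] at this
        exact absurd this (Finset.notMem_empty T)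
      refine ⟨K, hKG, ?_⟩
      intro p hp
      by_contra hpR
      have hmem : p ∈ ⋂₀ (t : Set (Set X)) := by
        intro T hTt
        rw [Finset.mem_coe] at hTt
        rw [hall T hTt]
        exact ⟨hp, hpR⟩
      rw [htempty] at hmem
      exact hmem
    · have hTmem : ⋂₀ (T' : Set (Set X)) ∈ G := hGfin T' hT'ne hT'G
      refine ⟨⋂₀ (T' : Set (Set X)), hTmem, ?_⟩
      intro p hp
      by_contra hpR
      have hpK : p ∈ K := hGsubK _ hTmem hp
      have hmem : p ∈ ⋂₀ (t : Set (Set X)) := by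
        intro T hTt
        rw [Finset.mem_coe] at hTt
        by_cases hTeq : T = K \ R
        · rw [hTeq]; exact ⟨hpK, hpR⟩
        · exact hp T (Finset.mem_erase.2 ⟨hTeq, hTt⟩)
      rw [htempty] at hmem
      exact hmem
  -- the avoidance relation
  set r : X → X → Prop := fun a b => ∀ F : Finset (Set X), ↑F ⊆ 𝒜 →
      (K \ ⋂₀ (F : Set (Set X))) ∈ G → a ∈ ⋂₀ (F : Set (Set X)) →
      b ∉ ⋂₀ (F : Set (Set X)) with hrdef
  -- the recursive sequence
  obtain ⟨x, hxK, hxr⟩ : ∃ x : ℕ → X, (∀ n, x n ∈ K) ∧ ∀ m n, m < n → r (x m) (x n) := by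
    apply exists_seq_of_forall_finset_exists (· ∈ K) r
    intro s _
    set D : Set (Finset (Set X)) := {F | ↑F ⊆ 𝒜 ∧ (K \ ⋂₀ (F : Set (Set X))) ∈ G ∧
      ∃ a ∈ s, a ∈ ⋂₀ (F : Set (Set X))} with hDdef
    have hDcount : D.Countable := by
      have hsub : D ⊆ ⋃ a ∈ (↑s : Set X), {F : Finset (Set X) | ↑F ⊆ {A ∈ 𝒜 | a ∈ A}} := by
        rintro F ⟨hF𝒜, -, a, has, haF⟩
        refine Set.mem_biUnion has ?_
        intro A hAF
        exact ⟨hF𝒜 hAF, haF A hAF⟩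
      exact (Set.Countable.biUnion s.countable_toSet
        (fun a _ => countable_finsets_subset (hpc a))).mono hsub
    rcases D.eq_empty_or_nonempty with hDe | hDne
    · obtain ⟨k, hk⟩ := hKne
      refine ⟨k, hk, fun a ha => ?_⟩
      intro F hF𝒜 hnull haF
      exfalso
      have : F ∈ D := ⟨hF𝒜, hnull, a, ha, haF⟩
      rw [hDe] at this
      exact this
    · obtain ⟨f, hf⟩ := hDcount.exists_eq_range hDne
      set C : ℕ → Set X := fun n => K \ ⋂₀ ((f n : Finset (Set X)) : Set (Set X)) with hCdef
      have hCG : ∀ n, C n ∈ G := by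
        intro n
        have : f n ∈ D := by rw [hf]; exact Set.mem_range_self n
        exact this.2.1
      have hTG := hGsigma C hCG
      obtain ⟨y, hy⟩ := hGne _ hTG
      have hyK : y ∈ K := hGsubK _ hTG hy
      refine ⟨y, hyK, fun a _ => ?_⟩
      intro F hF𝒜 hnull haF
      have hFD : F ∈ D := ⟨hF𝒜, hnull, ⟨a, by assumption, haF⟩⟩
      rw [hf] at hFD
      obtain ⟨n, rfl⟩ := hFD
      have hyn : y ∈ C n := Set.mem_iInter.1 hy n
      exact hyn.2
  -- a cluster point of the sequence
  obtain ⟨z, hzK, hz⟩ : ∃ z ∈ K, ∀ N : Set X, IsOpen N → z ∈ N →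
      ∀ n₀ : ℕ, ∃ m, n₀ ≤ m ∧ x m ∈ N := by
    by_contra hno
    push_neg at hno
    set V : ℕ → Set X := fun n => (closure (x '' {m | n ≤ m}))ᶜ with hVdef
    have hVopen : ∀ n, IsOpen (V n) := fun n => isClosed_closure.isOpen_compl
    have hcov : K ⊆ ⋃ n, V n := by
      intro p hpK
      obtain ⟨N, hNopen, hpN, n₀, hmiss⟩ := hno p hpK
      refine Set.mem_iUnion.2 ⟨n₀, ?_⟩
      rw [hVdef]
      simp only [Set.mem_compl_iff]
      intro hclos
      obtain ⟨w, hwN, hwS⟩ := (mem_closure_iff.1 hclos) N hNopen hpN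
      obtain ⟨m, hm, rfl⟩ := hwS
      exact hmiss m hm hwN
    obtain ⟨s, hs⟩ := hK V hVopen hcov
    set M := s.sup id with hMdef
    have hxM : x M ∈ K := hxK M
    obtain ⟨n, hns, hn⟩ := Set.mem_iUnion₂.1 (hs hxM)
    have hnM : n ≤ M := Finset.le_sup (f := id) hns
    have hmem : x M ∈ closure (x '' {m | n ≤ m}) := subset_closure ⟨M, hnM, rfl⟩
    exact hn hmem
  -- the countable family of metabase sets containing z
  set σz : Set (Set X) := {A ∈ 𝒜 | z ∈ A} with hσdef
  have hσc : σz.Countable := hpc z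
  have hσne : σz.Nonempty := by
    by_cases hex : ∃ y : X, y ≠ z
    · obtain ⟨y, hy⟩ := hex
      obtain ⟨A, hA𝒜, hzA, _⟩ := hsep z y (Ne.symm hy)
      exact ⟨A, hA𝒜, hzA⟩
    · push_neg at hex
      exfalso
      obtain ⟨i₀, hi₀⟩ := Set.mem_iUnion.1 (hKcov hzK)
      apply hnofin {i₀}
      intro w hw
      have hwz : w = z := hex w
      subst hwz
      simp only [Finset.mem_singleton, Set.mem_iUnion, exists_prop]
      exact ⟨i₀, rfl, hi₀⟩
  obtain ⟨e, he⟩ := hσc.exists_eq_range hσne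
  have heprop : ∀ m, e m ∈ 𝒜 ∧ z ∈ e m := by
    intro m
    have : e m ∈ σz := by rw [he]; exact Set.mem_range_self m
    exact this
  -- each finite intersection around z contains a member of G
  have hTex : ∀ m : ℕ, ∃ T ∈ G,
      T ⊆ ⋂₀ ((((Finset.range (m+1)).image e) : Finset (Set X)) : Set (Set X)) := by
    intro m
    set Fm : Finset (Set X) := (Finset.range (m+1)).image e with hFmdef
    have hFm𝒜 : (Fm : Set (Set X)) ⊆ 𝒜 := by
      intro A hA
      simp only [hFmdef, Finset.coe_image, Set.mem_image, Finset.mem_coe,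
        Finset.mem_range] at hA
      obtain ⟨i, _, rfl⟩ := hA
      exact (heprop i).1
    have hRopen : IsOpen (⋂₀ (Fm : Set (Set X))) :=
      Set.Finite.isOpen_sInter (Fm.finite_toSet) (fun A hA => hopen A (hFm𝒜 hA))
    have hzR : z ∈ ⋂₀ (Fm : Set (Set X)) := by
      intro A hA
      simp only [hFmdef, Finset.coe_image, Set.mem_image, Finset.mem_coe,
        Finset.mem_range] at hA
      obtain ⟨i, _, rfl⟩ := hA
      exact (heprop i).2
    have hnotnull : (K \ ⋂₀ (Fm : Set (Set X))) ∉ G := by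
      intro hnull
      obtain ⟨i, -, hxi⟩ := hz _ hRopen hzR 0
      obtain ⟨j, hij, hxj⟩ := hz _ hRopen hzR (i + 1)
      exact (hxr i j (by omega) Fm hFm𝒜 hnull hxi) hxj
    exact hdich _ hRopen hnotnull
  choose T hTG hTsub using hTex
  have hTint : (⋂ m, T m) ∈ G := hGsigma T hTG
  -- every point of ⋂ T m equals z
  have hwz : ∀ w ∈ ⋂ m, T m, w = z := by
    intro w hw
    by_contra hne
    obtain ⟨A, hA𝒜, hzA, hwA⟩ := hsep z w (fun h => hne h.symm)
    have hAσ : A ∈ σz := ⟨hA𝒜, hzA⟩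
    rw [he] at hAσ
    obtain ⟨m, rfl⟩ := hAσ
    have hwTm : w ∈ T m := Set.mem_iInter.1 hw m
    have hwFm := hTsub m hwTm
    have hemmem : e m ∈ (((Finset.range (m+1)).image e : Finset (Set X)) : Set (Set X)) := by
      simp only [Finset.coe_image, Set.mem_image, Finset.mem_coe, Finset.mem_range]
      exact ⟨m, by omega, rfl⟩
    exact hwA (hwFm (e m) hemmem)
  -- final contradiction
  obtain ⟨i₀, hi₀⟩ := Set.mem_iUnion.1 (hKcov hzK)
  have hB0i : (K \ U i₀) ∈ G := by
    apply hB0G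
    refine ⟨U i₀, hUopen i₀, ⟨{i₀}, ?_⟩, rfl⟩
    intro w hw
    simp only [Finset.mem_singleton, Set.mem_iUnion, exists_prop]
    exact ⟨i₀, rfl, hw.1⟩
  obtain ⟨w, hw⟩ := hGF {⋂ m, T m, K \ U i₀} (by
    intro A hA
    simp only [Finset.coe_insert, Finset.coe_singleton, Set.mem_insert_iff,
      Set.mem_singleton_iff] at hA
    rcases hA with rfl | rfl
    exacts [hTint, hB0i])
  have h1 : w ∈ ⋂ m, T m := hw _ (by simp)
  have h2 : w ∈ K \ U i₀ := hw _ (by simp)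
  have hwzz : w = z := hwz w h1
  subst hwzz
  exact h2.2 hi₀
end

section
/- If a topological space X has a point-countable p-metabase, then every compact subset K of X is a Gδ-subset of X, i.e., K is the intersection of countably many open subsets of X. -/
open Topology Set

/-- `F` is a minimal finite cover of `K` by members of `𝒜`. -/
def MinCover {X : Type*} (𝒜 : Set (Set X)) (K : Set X) (F : Finset (Set X)) : Prop :=
  ↑F ⊆ 𝒜 ∧ K ⊆ ⋃₀ (F : Set (Set X)) ∧
    ∀ A ∈ F, ¬ K ⊆ ⋃₀ ((F : Set (Set X)) \ {A})

/-- Miščenko's lemma: a point-countable family admits at most countably many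
finite minimal covers of any given set, of any given cardinality. -/
lemma mischenko {X : Type*} (𝒜 : Set (Set X)) (hpc : PointCountable 𝒜) :
    ∀ (n : ℕ) (K : Set X),
      {F : Finset (Set X) | MinCover 𝒜 K F ∧ F.card = n}.Countable := by
  classical
  intro n
  induction n with
  | zero =>
    intro K
    refine (Set.countable_singleton (∅ : Finset (Set X))).mono ?_
    rintro F ⟨_, hcard⟩
    simp [Finset.card_eq_zero.mp hcard]
  | succ n ih =>
    intro K
    rcases K.eq_empty_or_nonempty with hKe | ⟨x, hx⟩
    · subst hKe
      refine Set.countable_empty.mono ?_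
      rintro F ⟨⟨_, _, hmin⟩, hcard⟩
      obtain ⟨A, hA⟩ : F.Nonempty := Finset.card_pos.mp (by omega)
      exact absurd (Set.empty_subset _) (hmin A hA)
    · refine Set.Countable.mono ?_
        (Set.Countable.biUnion (hpc x) (fun A _ => (ih (K \ A)).image (insert A)))
      rintro F ⟨⟨hsub, hcov, hmin⟩, hcard⟩
      obtain ⟨A, hAF, hxA⟩ : ∃ A ∈ F, x ∈ A := by
        simpa using hcov hx
      have hA𝒜 : A ∈ {A ∈ 𝒜 | x ∈ A} := ⟨hsub hAF, hxA⟩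
      refine Set.mem_biUnion hA𝒜 ?_
      refine ⟨F.erase A, ⟨⟨?_, ?_, ?_⟩, ?_⟩, ?_⟩
      · exact fun B hB => hsub (Finset.mem_of_mem_erase (by exact_mod_cast hB))
      · rintro z ⟨hzK, hzA⟩
        obtain ⟨B, hBF, hzB⟩ : ∃ B ∈ F, z ∈ B := by simpa using hcov hzK
        have hBA : B ≠ A := fun h => hzA (h ▸ hzB)
        exact ⟨B, by simpa [and_comm] using Finset.mem_erase.mpr ⟨hBA, hBF⟩, hzB⟩
      · intro B hB hKsub
        have hBF : B ∈ F := Finset.mem_of_mem_erase hB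
        have hBA : B ≠ A := (Finset.mem_erase.mp hB).1
        obtain ⟨z, hzK, hz⟩ := Set.not_subset.mp (hmin B hBF)
        have hAe : A ∈ (↑F : Set (Set X)) \ {B} :=
          ⟨hAF, fun h => hBA (Set.mem_singleton_iff.mp h).symm⟩
        have hzA : z ∉ A := fun h => hz ⟨A, hAe, h⟩
        obtain ⟨C, hC, hzC⟩ := hKsub ⟨hzK, hzA⟩
        have hCF : C ∈ (↑F : Set (Set X)) \ {B} :=
          ⟨Finset.mem_coe.mpr (Finset.mem_of_mem_erase (by exact_mod_cast hC.1)), hC.2⟩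
        exact hz ⟨C, hCF, hzC⟩
      · rw [Finset.card_erase_of_mem hAF, hcard]; omega
      · exact Finset.insert_erase hAF

/-- Every finite cover contains a minimal cover. -/
lemma exists_minCover {X : Type*} (𝒜 : Set (Set X)) (K : Set X) :
    ∀ F : Finset (Set X), ↑F ⊆ 𝒜 → K ⊆ ⋃₀ (F : Set (Set X)) →
      ∃ G ⊆ F, MinCover 𝒜 K G := by
  classical
  intro F
  induction F using Finset.strongInduction with
  | _ F ih =>
    intro hsub hcov
    by_cases h : ∀ A ∈ F, ¬ K ⊆ ⋃₀ ((F : Set (Set X)) \ {A})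
    · exact ⟨F, le_refl F, hsub, hcov, h⟩
    · push_neg at h
      obtain ⟨A, hAF, hAcov⟩ := h
      obtain ⟨G, hGF, hG⟩ := ih (F.erase A) (Finset.erase_ssubset hAF)
        (fun B hB => hsub (Finset.mem_of_mem_erase (by exact_mod_cast hB)))
        (by rw [Finset.coe_erase]; exact hAcov)
      exact ⟨G, hGF.trans (Finset.erase_subset _ _), hG⟩

theorem compact_isGdelta_of_pMetabase {X : Type*} [TopologicalSpace X]
    (𝒜 : Set (Set X)) (h𝒜 : IsPMetabase X 𝒜) (hpc : PointCountable 𝒜)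
    (K : Set X) (hK : IsCompact K) :
    ∃ U : ℕ → Set X, (∀ n, IsOpen (U n)) ∧ K = ⋂ n, U n := by
  classical
  set S := {F : Finset (Set X) | MinCover 𝒜 K F} with hS
  have hScnt : S.Countable := by
    have hEq : S = ⋃ n : ℕ, {F : Finset (Set X) | MinCover 𝒜 K F ∧ F.card = n} := by
      ext F
      simp only [hS, Set.mem_setOf_eq, Set.mem_iUnion]
      exact ⟨fun h => ⟨F.card, h, rfl⟩, fun ⟨n, h, _⟩ => h⟩
    rw [hEq]
    exact Set.countable_iUnion fun n => mischenko 𝒜 hpc n K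
  set T := insert (Set.univ : Set X) ((fun F : Finset (Set X) => ⋃₀ ↑F) '' S) with hT
  have hTc : T.Countable := (hScnt.image _).insert _
  have hTne : T.Nonempty := ⟨Set.univ, Set.mem_insert _ _⟩
  obtain ⟨U, hU⟩ := hTc.exists_eq_range hTne
  have hmemT : ∀ n, U n ∈ T := fun n => hU ▸ Set.mem_range_self n
  refine ⟨U, ?_, ?_⟩
  · intro n
    rcases hmemT n with h | ⟨F, hF, h⟩
    · rw [h]; exact isOpen_univ
    · rw [← h]
      exact isOpen_sUnion fun A hA => h𝒜.1 A (hF.1 hA)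
  · have hKT : K = ⋂₀ T := by
      apply Set.Subset.antisymm
      · intro z hz V hV
        rcases hV with h | ⟨F, hF, h⟩
        · rw [h]; trivial
        · rw [← h]; exact hF.2.1 hz
      · intro y hy
        by_contra hyK
        -- for each x ∈ K pick a finite open family containing x and avoiding y
        have hsep : ∀ x : X, x ∈ K → ∃ F : Finset (Set X), ↑F ⊆ 𝒜 ∧
            x ∈ interior (⋃₀ (F : Set (Set X))) ∧ ⋃₀ (F : Set (Set X)) ⊆ {y}ᶜ := by
          intro x hx
          exact h𝒜.2 x y (fun h => hyK (h ▸ hx))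
        choose! f hf1 hf2 hf3 using hsep
        obtain ⟨t, ht⟩ := hK.elim_finite_subcover
          (fun i : K => interior (⋃₀ ((f i : Finset (Set X)) : Set (Set X))))
          (fun i => isOpen_interior)
          (fun z hz => Set.mem_iUnion.mpr ⟨⟨z, hz⟩, hf2 z hz⟩)
        set F : Finset (Set X) := t.biUnion (fun i => f i) with hF
        have hsub : ↑F ⊆ 𝒜 := by
          intro A hA
          simp only [hF, Finset.coe_biUnion, Set.mem_iUnion] at hA
          obtain ⟨i, hi, hAi⟩ := hA
          exact hf1 i i.2 hAi
        have hcov : K ⊆ ⋃₀ (F : Set (Set X)) := by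
          intro z hz
          obtain ⟨i, hit, hzi⟩ : ∃ i ∈ t,
              z ∈ interior (⋃₀ ((f i : Finset (Set X)) : Set (Set X))) := by
            simpa using ht hz
          obtain ⟨A, hA, hzA⟩ := interior_subset hzi
          exact ⟨A, by
            simp only [hF, Finset.coe_biUnion, Set.mem_iUnion]
            exact ⟨i, hit, hA⟩, hzA⟩
        have hyF : y ∉ ⋃₀ (F : Set (Set X)) := by
          rintro ⟨A, hA, hyA⟩
          simp only [hF, Finset.coe_biUnion, Set.mem_iUnion] at hA
          obtain ⟨i, hi, hAi⟩ := hA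
          exact hf3 i i.2 ⟨A, hAi, hyA⟩ rfl
        obtain ⟨G, hGF, hG⟩ := exists_minCover 𝒜 K F hsub hcov
        have hGT : ⋃₀ (G : Set (Set X)) ∈ T :=
          Set.mem_insert_iff.mpr (Or.inr ⟨G, hG, rfl⟩)
        have hyG : y ∈ ⋃₀ (G : Set (Set X)) := hy _ hGT
        obtain ⟨A, hA, hyA⟩ := hyG
        exact hyF ⟨A, Finset.coe_subset.mpr hGF hA, hyA⟩
    rw [hKT, hU, Set.sInter_range]
end

section
/- Let X be a Lindelöf topological space such that every point has an open neighborhood admitting a δθ-base. Then X has a δθ-base. -/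
open Topology Set

/-- `ℬ = ⋃ₙ ℬₙ` is a δθ-base: all members are open and whenever `x ∈ U` open, there
are `n` and `B ∈ ℬₙ` with `x` in at least one and at most countably many members of `ℬₙ`
and `x ∈ B ⊆ U`. -/
def IsDeltaThetaBase (X : Type*) [TopologicalSpace X] (ℬ : ℕ → Set (Set X)) : Prop :=
  (∀ n, ∀ B ∈ ℬ n, IsOpen B) ∧
  ∀ (x : X) (U : Set X), IsOpen U → x ∈ U →
    ∃ n, ∃ B ∈ ℬ n, x ∈ B ∧ B ⊆ U ∧ {A ∈ ℬ n | x ∈ A}.Countable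

theorem lindelof_locally_deltaThetaBase {X : Type*} [TopologicalSpace X] [LindelofSpace X]
    (h : ∀ x : X, ∃ U : Set X, IsOpen U ∧ x ∈ U ∧
      ∃ ℬ : ℕ → Set (Set ↥U), IsDeltaThetaBase ↥U ℬ) :
    ∃ ℬ : ℕ → Set (Set X), IsDeltaThetaBase X ℬ := by
  cases isEmpty_or_nonempty X with
  | inl hEmpty =>
    refine ⟨fun _ => ∅, fun n B hB => absurd hB (notMem_empty B), fun x => (hEmpty.false x).elim⟩
  | inr hNe =>
    choose! U hUo hxU ℬs hℬ using h
    obtain ⟨t, htc, htcov⟩ := (isLindelof_univ (X := X)).elim_countable_subcover U hUo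
      (fun x _ => mem_iUnion.2 ⟨x, hxU x⟩)
    have htne : t.Nonempty := by
      obtain ⟨x0⟩ := hNe
      obtain ⟨y, hy, _⟩ := mem_iUnion₂.1 (htcov (mem_univ x0))
      exact ⟨y, hy⟩
    obtain ⟨f, hf⟩ := htc.exists_eq_range htne
    have hcov : ∀ x : X, ∃ i, x ∈ U (f i) := by
      intro x
      obtain ⟨y, hy, hxy⟩ := mem_iUnion₂.1 (htcov (mem_univ x))
      rw [hf] at hy
      obtain ⟨i, rfl⟩ := hy
      exact ⟨i, hxy⟩
    refine ⟨fun k => (fun B : Set ↥(U (f k.unpair.1)) => Subtype.val '' B) ''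
        (ℬs (f k.unpair.1) k.unpair.2), ?_, ?_⟩
    · rintro k A ⟨B, hB, rfl⟩
      exact ((hUo (f k.unpair.1)).isOpenMap_subtype_val) B
        ((hℬ (f k.unpair.1)).1 k.unpair.2 B hB)
    · intro x V hV hxV
      obtain ⟨i, hxi⟩ := hcov x
      have hbase := hℬ (f i)
      have hVo : IsOpen ((Subtype.val : ↥(U (f i)) → X) ⁻¹' V) :=
        hV.preimage continuous_subtype_val
      obtain ⟨n, B, hB, hxB, hBV, hcnt⟩ := hbase.2 ⟨x, hxi⟩ _ hVo hxV
      obtain ⟨k, hk⟩ : ∃ k, Nat.pair i n = k := ⟨_, rfl⟩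
      have h1 : k.unpair.1 = i := by rw [← hk]; simp
      have h2 : k.unpair.2 = n := by rw [← hk]; simp
      clear hk
      refine ⟨k, Subtype.val '' B, ?_, ⟨⟨x, hxi⟩, hxB, rfl⟩,
        image_subset_iff.2 hBV, ?_⟩
      · subst h1 h2
        exact ⟨B, hB, rfl⟩
      · have hsub : {A ∈ (fun B : Set ↥(U (f k.unpair.1)) => Subtype.val '' B) ''
            (ℬs (f k.unpair.1) k.unpair.2) | x ∈ A} ⊆
            (fun B : Set ↥(U (f i)) => Subtype.val '' B) ''
              {B ∈ ℬs (f i) n | (⟨x, hxi⟩ : ↥(U (f i))) ∈ B} := by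
          subst h1 h2
          rintro A ⟨⟨B', hB', rfl⟩, hxA⟩
          obtain ⟨b, hbB, hbx⟩ := hxA
          have hb : b = ⟨x, hxi⟩ := Subtype.ext hbx
          exact ⟨B', ⟨hB', hb ▸ hbB⟩, rfl⟩
        exact (hcnt.image _).mono hsub
end

section
/- Let X be a Lindelöf topological space such that every point has an open neighborhood admitting a quasi-Gδ-diagonal. Then X has a quasi-Gδ-diagonal. -/
open Topology Set

/-- The star of `x` with respect to a family `𝒢`. -/
def star' {X : Type*} (x : X) (𝒢 : Set (Set X)) : Set X := ⋃₀ {G ∈ 𝒢 | x ∈ G}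

/-- `X` has a quasi-Gδ-diagonal: there is a sequence `𝒢ₙ` of families of open sets such
that for distinct `x ≠ y` there is `n` with `x ∈ st(x, 𝒢ₙ) ⊆ X \ {y}`. -/
def HasQuasiGDeltaDiagonal (X : Type*) [TopologicalSpace X] : Prop :=
  ∃ 𝒢 : ℕ → Set (Set X), (∀ n, ∀ G ∈ 𝒢 n, IsOpen G) ∧
    ∀ x y : X, x ≠ y → ∃ n, x ∈ star' x (𝒢 n) ∧ star' x (𝒢 n) ⊆ {y}ᶜ

lemma star'_image {X : Type*} (U : Set X) (x : U) (𝒢 : Set (Set ↥U)) :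
    star' (x : X) ((fun G => ((↑) : U → X) '' G) '' 𝒢) = ((↑) : U → X) '' star' x 𝒢 := by
  ext z
  simp only [star', mem_sUnion, mem_image, mem_setOf_eq]
  constructor
  · rintro ⟨G', ⟨⟨G, hG, rfl⟩, hxG⟩, hz⟩
    obtain ⟨w, hw, hwz⟩ := hz
    obtain ⟨a, ha, hax⟩ := hxG
    have : a = x := Subtype.ext hax
    subst this
    exact ⟨w, ⟨G, ⟨hG, ha⟩, hw⟩, hwz⟩
  · rintro ⟨w, ⟨G, ⟨hG, hxG⟩, hw⟩, rfl⟩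
    exact ⟨(↑) '' G, ⟨⟨G, hG, rfl⟩, ⟨x, hxG, rfl⟩⟩, ⟨w, hw, rfl⟩⟩

theorem lindelof_locally_quasiGDeltaDiagonal {X : Type*} [TopologicalSpace X]
    [LindelofSpace X]
    (h : ∀ x : X, ∃ U : Set X, IsOpen U ∧ x ∈ U ∧ HasQuasiGDeltaDiagonal ↥U) :
    HasQuasiGDeltaDiagonal X := by
  rcases isEmpty_or_nonempty X with hX | hX
  · exact ⟨fun _ => ∅, fun n G hG => hG.elim, fun x => (IsEmpty.false x).elim⟩
  choose U hUopen hxU hUq using h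
  have hcover : (univ : Set X) ⊆ ⋃ x, U x := fun x _ => mem_iUnion.2 ⟨x, hxU x⟩
  obtain ⟨t, htc, htcov⟩ := isLindelof_univ.elim_countable_subcover U hUopen hcover
  have htne : t.Nonempty := by
    rcases hX with ⟨x⟩
    have := htcov (mem_univ x)
    simp only [mem_iUnion] at this
    obtain ⟨i, hi, _⟩ := this
    exact ⟨i, hi⟩
  obtain ⟨f, hf⟩ := Set.Countable.exists_eq_range htc htne
  choose 𝒢 h𝒢open h𝒢 using fun i : ℕ => hUq (f i)
  let F : ℕ × Option ℕ → Set (Set X) := fun p =>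
    Option.rec {U (f p.1)} (fun n => (fun G => ((↑) : U (f p.1) → X) '' G) '' 𝒢 p.1 n) p.2
  refine ⟨fun k => F (Denumerable.ofNat (ℕ × Option ℕ) k), ?_, ?_⟩
  · intro k G hG
    replace hG : G ∈ F (Denumerable.ofNat (ℕ × Option ℕ) k) := hG
    rcases hp : Denumerable.ofNat (ℕ × Option ℕ) k with ⟨i, _ | n⟩ <;>
      rw [hp] at hG <;> simp only [F, mem_image, mem_singleton_iff] at hG
    · subst hG; exact hUopen (f i)
    · obtain ⟨G', hG', rfl⟩ := hG
      exact (hUopen (f i)).isOpenMap_subtype_val G' (h𝒢open i n G' hG')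
  · intro x y hxy
    have hx : x ∈ ⋃ i ∈ t, U i := htcov (mem_univ x)
    simp only [mem_iUnion] at hx
    obtain ⟨j, hjt, hxj⟩ := hx
    have hjr : j ∈ range f := by rw [← hf]; exact hjt
    obtain ⟨i, rfl⟩ := hjr
    by_cases hy : y ∈ U (f i)
    · obtain ⟨n, hmem, hsub⟩ := h𝒢 i ⟨x, hxj⟩ ⟨y, hy⟩ (fun hc => hxy (congrArg Subtype.val hc))
      refine ⟨Encodable.encode ((i, some n) : ℕ × Option ℕ), ?_⟩
      simp only [Denumerable.ofNat_encode]
      have hst : star' x (F (i, some n)) = ((↑) : U (f i) → X) '' star' ⟨x, hxj⟩ (𝒢 i n) :=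
        star'_image (U (f i)) ⟨x, hxj⟩ (𝒢 i n)
      rw [hst]
      constructor
      · exact ⟨⟨x, hxj⟩, hmem, rfl⟩
      · rintro z ⟨w, hw, rfl⟩ hzy
        have : w = ⟨y, hy⟩ := Subtype.ext hzy
        exact hsub hw (this ▸ rfl)
    · refine ⟨Encodable.encode ((i, none) : ℕ × Option ℕ), ?_⟩
      simp only [Denumerable.ofNat_encode]
      constructor
      · exact ⟨U (f i), ⟨rfl, hxj⟩, hxj⟩
      · rintro z ⟨G, ⟨hG, _⟩, hzG⟩ hzy
        have : G = U (f i) := hG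
        subst this
        exact hy (hzy ▸ hzG)
end

section
/- Every countably compact Hausdorff D-space is compact. -/
open Topology Set

/-- `X` is a D-space: for every neighborhood assignment `φ` there is a closed discrete
set `D` with `X = ⋃_{d ∈ D} φ d`. -/
def IsDSpace (X : Type*) [TopologicalSpace X] : Prop :=
  ∀ φ : X → Set X, (∀ x, IsOpen (φ x) ∧ x ∈ φ x) →
    ∃ D : Set X, IsClosed D ∧ DiscreteTopology ↥D ∧ ⋃ d ∈ D, φ d = univ

/-- In a countably compact space, closed discrete sets are finite. -/
lemma finite_of_closed_discrete {X : Type*} [TopologicalSpace X]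
    (hcc : ∀ U : ℕ → Set X, (∀ n, IsOpen (U n)) → (⋃ n, U n) = univ →
      ∃ s : Finset ℕ, (⋃ n ∈ s, U n) = univ)
    (D : Set X) (hcl : IsClosed D) (hdisc : DiscreteTopology ↥D) : D.Finite := by
  by_contra hinf
  have hinf' : D.Infinite := hinf
  obtain ⟨f⟩ : Nonempty (ℕ ↪ ↥D) := ⟨hinf'.natEmbedding D⟩
  -- for each d in D, an open V with V ∩ D = {d}
  have key : ∀ d : ↥D, ∃ V : Set X, IsOpen V ∧ V ∩ D = {(d : X)} := by
    intro d
    have h1 : IsOpen ({d} : Set ↥D) := isOpen_discrete _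
    rw [isOpen_induced_iff] at h1
    obtain ⟨V, hV, hVd⟩ := h1
    refine ⟨V, hV, ?_⟩
    ext x
    constructor
    · rintro ⟨hxV, hxD⟩
      have : (⟨x, hxD⟩ : ↥D) ∈ (Subtype.val ⁻¹' V : Set ↥D) := hxV
      rw [hVd] at this
      simpa [Subtype.ext_iff] using this
    · rintro rfl
      have : (d : ↥D) ∈ ({d} : Set ↥D) := rfl
      rw [← hVd] at this
      exact ⟨this, d.2⟩
  choose V hVopen hVD using key
  set E : Set X := Subtype.val '' (Set.range f) with hE
  have hED : E ⊆ D := by rintro x ⟨y, _, rfl⟩; exact y.2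
  have hVE : ∀ n, V (f n) ∩ E = {(f n : X)} := by
    intro n
    apply Set.Subset.antisymm
    · intro x ⟨hxV, hxE⟩
      have : x ∈ V (f n) ∩ D := ⟨hxV, hED hxE⟩
      rw [hVD] at this; exact this
    · rintro x rfl
      have : (f n : X) ∈ V (f n) ∩ D := by rw [hVD]; rfl
      exact ⟨this.1, ⟨f n, Set.mem_range_self n, rfl⟩⟩
  have hEc : IsClosed E := by
    rw [← isOpen_compl_iff, isOpen_iff_forall_mem_open]
    intro x hx
    by_cases hxD : x ∈ D
    · refine ⟨V ⟨x, hxD⟩, ?_, (hVopen _), ?_⟩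
      · intro y hy hyE
        have : y ∈ V ⟨x, hxD⟩ ∩ D := ⟨hy, hED hyE⟩
        rw [hVD] at this
        simp only [Set.mem_singleton_iff] at this
        exact hx (this ▸ hyE)
      · have : x ∈ V ⟨x, hxD⟩ ∩ D := by rw [hVD]; rfl
        exact this.1
    · exact ⟨Dᶜ, fun y hy hyE => hy (hED hyE), hcl.isOpen_compl, hxD⟩
  set U : ℕ → Set X := fun n => V (f n) ∪ Eᶜ with hU
  have hUopen : ∀ n, IsOpen (U n) := fun n => (hVopen _).union hEc.isOpen_compl
  have hUcov : (⋃ n, U n) = univ := by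
    ext x
    simp only [Set.mem_iUnion, Set.mem_univ, iff_true]
    by_cases hxE : x ∈ E
    · obtain ⟨y, ⟨n, rfl⟩, rfl⟩ := hxE
      refine ⟨n, Or.inl ?_⟩
      have : (f n : X) ∈ V (f n) ∩ D := by rw [hVD]; rfl
      exact this.1
    · exact ⟨0, Or.inr hxE⟩
  obtain ⟨s, hs⟩ := hcc U hUopen hUcov
  obtain ⟨m, hm⟩ := Infinite.exists_notMem_finset s
  have hfm : (f m : X) ∈ ⋃ n ∈ s, U n := hs ▸ Set.mem_univ _
  rw [Set.mem_iUnion₂] at hfm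
  obtain ⟨n, hns, hfmn⟩ := hfm
  cases hfmn with
  | inl h =>
    have : (f m : X) ∈ V (f n) ∩ E := ⟨h, ⟨f m, Set.mem_range_self m, rfl⟩⟩
    rw [hVE] at this
    have : f m = f n := Subtype.ext this
    exact hm (f.injective this ▸ hns)
  | inr h => exact h ⟨f m, Set.mem_range_self m, rfl⟩

theorem countablyCompact_dSpace_compact {X : Type*} [TopologicalSpace X] [T2Space X]
    (hcc : ∀ U : ℕ → Set X, (∀ n, IsOpen (U n)) → (⋃ n, U n) = univ →
      ∃ s : Finset ℕ, (⋃ n ∈ s, U n) = univ)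
    (hD : IsDSpace X) : CompactSpace X := by
  classical
  rw [← isCompact_univ_iff]
  apply isCompact_of_finite_subcover
  intro ι U hU hcov
  have hch : ∀ x : X, ∃ i, x ∈ U i := fun x => Set.mem_iUnion.mp (hcov (Set.mem_univ x))
  choose g hg using hch
  obtain ⟨D, hcl, hdisc, hunion⟩ := hD (fun x => U (g x)) (fun x => ⟨hU _, hg x⟩)
  have hfin : D.Finite := finite_of_closed_discrete hcc D hcl hdisc
  refine ⟨hfin.toFinset.image g, fun x _ => ?_⟩
  have : x ∈ ⋃ d ∈ D, U (g d) := hunion ▸ Set.mem_univ x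
  rw [Set.mem_iUnion₂] at this
  obtain ⟨d, hd, hxd⟩ := this
  exact Set.mem_iUnion₂.mpr ⟨g d, Finset.mem_image_of_mem g (hfin.mem_toFinset.mpr hd), hxd⟩
end

section
/- Let G be a non-locally compact topological group with a Hausdorff compactification bG, and write Y = bG \ G = Y₁ ∪ Y₂ where both Y₁ and Y₂ have countable pseudocharacter (every singleton is a Gδ-set). If at most one of Y₁, Y₂ is dense in bG, then either G is a paracompact p-space or Y is first-countable at some point. -/
open Topology Set Function

open Filter Pointwise Uniformity

universe u v

lemma nested_compact_base {X : Type v} [TopologicalSpace X] {C : ℕ → Set X}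
    (hcomp : ∀ n, IsCompact (C n)) (hcl : ∀ n, IsClosed (C n))
    (hanti : ∀ n, C (n + 1) ⊆ C n)
    {U : Set X} (hU : IsOpen U) (h : (⋂ n, C n) ⊆ U) : ∃ n, C n ⊆ U := by
  by_contra hcon
  push_neg at hcon
  have hanti' : ∀ {m n : ℕ}, m ≤ n → C n ⊆ C m := by
    intro m n hmn
    induction hmn with
    | refl => exact subset_rfl
    | step h ih => exact (hanti _).trans ih
  have hne : ∀ n, (C n ∩ Uᶜ).Nonempty := by
    intro n
    obtain ⟨x, hx1, hx2⟩ := not_subset.1 (hcon n)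
    exact ⟨x, hx1, hx2⟩
  have hdir : Directed (· ⊇ ·) fun n => C n ∩ Uᶜ := by
    intro m n
    refine ⟨max m n, inter_subset_inter_left _ (hanti' (le_max_left m n)),
      inter_subset_inter_left _ (hanti' (le_max_right m n))⟩
  have hint := IsCompact.nonempty_iInter_of_directed_nonempty_isCompact_isClosed
    (fun n => C n ∩ Uᶜ) hdir hne
    (fun n => (hcomp n).inter_right (isClosed_compl_iff.2 hU))
    (fun n => (hcl n).inter (isClosed_compl_iff.mpr hU))
  obtain ⟨x, hx⟩ := hint
  have hx1 : x ∈ ⋂ n, C n := mem_iInter.2 fun n => (mem_iInter.1 hx n).1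
  exact (mem_iInter.1 hx 0).2 (h hx1)

theorem paracompact_of_perfect {X : Type u} {Y : Type u} [TopologicalSpace X] [TopologicalSpace Y]
    [ParacompactSpace Y] {f : X → Y} (hf : Continuous f) (hcl : IsClosedMap f)
    (hsurj : Surjective f) (hcomp : ∀ y, IsCompact (f ⁻¹' {y})) : ParacompactSpace X := by
  constructor
  intro ι s hso hscov
  -- for each y, choose a finite subcover of the fiber
  have hfib : ∀ y : Y, ∃ t : Finset ι, f ⁻¹' {y} ⊆ ⋃ i ∈ t, s i := by
    intro y
    obtain ⟨t, ht⟩ := (hcomp y).elim_finite_subcover s hso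
      (by rw [hscov]; exact subset_univ _)
    exact ⟨t, ht⟩
  choose t ht using hfib
  -- the open set U y containing the fiber
  set Uy : Y → Set X := fun y => ⋃ i ∈ t y, s i with hUy
  have hUyo : ∀ y, IsOpen (Uy y) := fun y => isOpen_biUnion fun i _ => hso i
  -- the saturated open neighborhood
  set Wy : Y → Set Y := fun y => (f '' (Uy y)ᶜ)ᶜ with hWy
  have hWyo : ∀ y, IsOpen (Wy y) := fun y => (hcl _ (hUyo y).isClosed_compl).isOpen_compl
  have hWymem : ∀ y, y ∈ Wy y := by
    intro y
    intro hmem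
    obtain ⟨x, hx1, hx2⟩ := hmem
    exact hx1 (ht y (by rw [mem_preimage, hx2]; exact rfl))
  have hWypre : ∀ y, f ⁻¹' (Wy y) ⊆ Uy y := by
    intro y x hx
    by_contra hxU
    exact hx (mem_image_of_mem f hxU)
  -- refine the cover of Y
  obtain ⟨β, r, hro, hrcov, hrlf, hrsub⟩ := ParacompactSpace.locallyFinite_refinement
    Y Wy hWyo (by
      apply eq_univ_of_forall
      intro y; exact mem_iUnion.2 ⟨y, hWymem y⟩)
  choose yb hyb using hrsub
  -- final refinement on X
  refine ⟨Σ b : β, {i : ι // i ∈ t (yb b)}, fun p => f ⁻¹' (r p.1) ∩ s p.2.1, ?_, ?_, ?_, ?_⟩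
  · exact fun p => ((hro p.1).preimage hf).inter (hso p.2.1)
  · apply eq_univ_of_forall
    intro x
    have : f x ∈ ⋃ b, r b := by rw [hrcov]; exact mem_univ _
    obtain ⟨b, hb⟩ := mem_iUnion.1 this
    have hxU : x ∈ Uy (yb b) := hWypre _ (hyb b hb)
    obtain ⟨i, hi⟩ := mem_iUnion.1 hxU
    obtain ⟨hit, hxi⟩ := mem_iUnion.1 hi
    exact mem_iUnion.2 ⟨⟨b, ⟨i, hit⟩⟩, ⟨hb, hxi⟩⟩
  · -- locally finite
    intro x
    obtain ⟨N, hN1, hN2⟩ := hrlf (f x)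
    refine ⟨f ⁻¹' N, hf.continuousAt.preimage_mem_nhds hN1, ?_⟩
    have : {p : Σ b : β, {i : ι // i ∈ t (yb b)} |
        ((f ⁻¹' (r p.1) ∩ s p.2.1) ∩ f ⁻¹' N).Nonempty} ⊆
        ⋃ b ∈ {b : β | (r b ∩ N).Nonempty}, ⋃ i : {i : ι // i ∈ t (yb b)}, {⟨b, i⟩} := by
      rintro ⟨b, i⟩ ⟨z, ⟨hz1, _⟩, hz2⟩
      exact mem_biUnion ⟨f z, hz1, hz2⟩ (mem_iUnion.2 ⟨i, rfl⟩)
    exact Set.Finite.subset (Finite.biUnion hN2 (fun b _ => finite_iUnion (fun i => finite_singleton _))) this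
  · rintro ⟨b, i⟩
    exact ⟨i.1, inter_subset_right⟩

/-- `G` is a paracompact p-space: paracompact and admits a perfect map onto a
metrizable space. -/
def IsParacompactPSpace (G : Type u) [TopologicalSpace G] : Prop :=
  ParacompactSpace G ∧ ∃ (M : Type u) (_ : MetricSpace M) (f : G → M),
    Continuous f ∧ IsClosedMap f ∧ Surjective f ∧ ∀ m : M, IsCompact (f ⁻¹' {m})

lemma mem_closure_singleton_basis {X : Type v} [TopologicalSpace X] {x y : X} {B : ℕ → Set X}
    (h : (𝓝 x).HasBasis (fun _ : ℕ => True) B) :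
    x ∈ closure ({y} : Set X) ↔ ∀ n, y ∈ B n := by
  rw [mem_closure_iff_nhds_basis h]
  constructor
  · intro hh n
    obtain ⟨z, hz1, hz2⟩ := hh n trivial
    rw [mem_singleton_iff] at hz1
    rwa [hz1] at hz2
  · intro hh n _
    exact ⟨y, rfl, hh n⟩

/-- A wrapper around `Quotient` with no pre-existing topology instances. -/
def MetricQuot {G : Type u} (S : Setoid G) : Type u := Quotient S

theorem quotient_metric_pspace {G : Type u} [TopologicalSpace G] [Group G] [IsTopologicalGroup G]
    (H : Set G) (hH1 : (1 : G) ∈ H)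
    (hHmul : ∀ x ∈ H, ∀ y ∈ H, x * y ∈ H)
    (hHinv : ∀ x ∈ H, x⁻¹ ∈ H)
    (hHcomp : IsCompact H)
    (d : G → G → ℝ)
    (hdself : ∀ x, d x x = 0)
    (hdcomm : ∀ x y, d x y = d y x)
    (hdtri : ∀ x y z, d x z ≤ d x y + d y z)
    (hd0 : ∀ x y, d x y = 0 ↔ x⁻¹ * y ∈ H)
    (hballopen : ∀ (x : G) (ε : ℝ), IsOpen {y : G | d x y < ε})
    (hsep : ∀ T : Set G, IsClosed T → ∀ x, x ∉ T * H →
      ∃ ε > 0, ∀ y, d x y < ε → y ∉ T * H) :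
    IsParacompactPSpace G := by
  classical
  letI S : Setoid G :=
    ⟨fun x y => x⁻¹ * y ∈ H, by
      refine ⟨fun x => by simpa using hH1, ?_, ?_⟩
      · intro x y h
        have := hHinv _ h
        simpa using this
      · intro x y z hxy hyz
        have := hHmul _ hxy _ hyz
        simpa [mul_assoc] using this⟩
  let M : Type u := MetricQuot S
  have hrep : ∀ m : M, ∃ x : G, (show M from ⟦x⟧) = m := fun m => Quotient.exists_rep m
  have hwd : ∀ a₁ b₁ a₂ b₂ : G, a₁ ≈ a₂ → b₁ ≈ b₂ → d a₁ b₁ = d a₂ b₂ := by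
    intro a₁ b₁ a₂ b₂ ha hb
    have hda : d a₁ a₂ = 0 := (hd0 _ _).2 ha
    have hdb : d b₁ b₂ = 0 := (hd0 _ _).2 hb
    have hda' : d a₂ a₁ = 0 := by rw [hdcomm]; exact hda
    have hdb' : d b₂ b₁ = 0 := by rw [hdcomm]; exact hdb
    have h1 : d a₁ b₁ ≤ d a₂ b₂ := by
      calc d a₁ b₁ ≤ d a₁ a₂ + d a₂ b₁ := hdtri _ _ _
        _ ≤ d a₁ a₂ + (d a₂ b₂ + d b₂ b₁) := by
            exact (add_le_add_iff_left _).2 (hdtri _ _ _)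
        _ = d a₂ b₂ := by rw [hda, hdb']; ring
    have h2 : d a₂ b₂ ≤ d a₁ b₁ := by
      calc d a₂ b₂ ≤ d a₂ a₁ + d a₁ b₂ := hdtri _ _ _
        _ ≤ d a₂ a₁ + (d a₁ b₁ + d b₁ b₂) := by
            exact (add_le_add_iff_left _).2 (hdtri _ _ _)
        _ = d a₁ b₁ := by rw [hda', hdb]; ring
    exact le_antisymm h1 h2
  let dM : M → M → ℝ := Quotient.lift₂ d hwd
  have hmself : ∀ m : M, dM m m = 0 := by
    intro m
    obtain ⟨x, rfl⟩ := hrep m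
    exact hdself x
  have hmcomm : ∀ m₁ m₂ : M, dM m₁ m₂ = dM m₂ m₁ := by
    intro m₁ m₂
    obtain ⟨x, rfl⟩ := hrep m₁
    obtain ⟨y, rfl⟩ := hrep m₂
    exact hdcomm x y
  have hmtri : ∀ m₁ m₂ m₃ : M, dM m₁ m₃ ≤ dM m₁ m₂ + dM m₂ m₃ := by
    intro m₁ m₂ m₃
    obtain ⟨x, rfl⟩ := hrep m₁
    obtain ⟨y, rfl⟩ := hrep m₂
    obtain ⟨z, rfl⟩ := hrep m₃
    exact hdtri x y z
  have hmeq : ∀ m₁ m₂ : M, dM m₁ m₂ = 0 → m₁ = m₂ := by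
    intro m₁ m₂
    obtain ⟨x, rfl⟩ := hrep m₁
    obtain ⟨y, rfl⟩ := hrep m₂
    intro h
    have : (⟦x⟧ : Quotient S) = ⟦y⟧ := Quotient.sound ((hd0 x y).1 h)
    exact congrArg (fun q => show M from q) this
  let mM : MetricSpace M :=
    { dist := dM
      dist_self := hmself
      dist_comm := hmcomm
      dist_triangle := hmtri
      eq_of_dist_eq_zero := fun {m₁ m₂} h => hmeq m₁ m₂ h }
  letI := mM
  let fq : G → M := fun x => show M from ⟦x⟧
  have hdist_eq : ∀ x y : G, dist (fq x) (fq y) = d x y := fun x y => rfl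
  -- continuity
  have hfc : Continuous fq := by
    rw [continuous_def]
    intro s hs
    rw [isOpen_iff_forall_mem_open]
    intro x hx
    obtain ⟨ε, hε, hball⟩ := Metric.isOpen_iff.1 hs (fq x) hx
    refine ⟨{y : G | d x y < ε}, ?_, hballopen x ε, by simp [hdself x, hε]⟩
    intro y hy
    have : dist (fq y) (fq x) < ε := by
      rw [dist_comm, hdist_eq]
      exact hy
    exact hball this
  -- closedness
  have hfcl : IsClosedMap fq := by
    intro T hT
    rw [← isOpen_compl_iff]
    rw [Metric.isOpen_iff]
    intro ξ hξ
    obtain ⟨x, rfl⟩ : ∃ x, fq x = ξ := hrep ξ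
    have hxTH : x ∉ T * H := by
      intro hmem
      obtain ⟨c, hc, h, hh, hch⟩ := hmem
      apply hξ
      refine ⟨c, hc, ?_⟩
      apply Quotient.sound
      show c⁻¹ * x ∈ H
      have : x = c * h := hch.symm
      rw [this]
      simpa using hh
    obtain ⟨ε, hε, hsepx⟩ := hsep T hT x hxTH
    refine ⟨ε, hε, ?_⟩
    intro η hη
    intro hmem
    obtain ⟨c, hc, hcη⟩ := hmem
    have hd' : d x c < ε := by
      have : dist (fq x) (fq c) < ε := by
        rw [hcη]
        rw [dist_comm]
        exact hη
      rwa [hdist_eq] at this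
    have : c ∉ T * H := hsepx c hd'
    exact this ⟨c, hc, 1, hH1, by simp⟩
  -- surjectivity
  have hfs : Surjective fq := fun m => hrep m
  -- compact fibers
  have hffib : ∀ m : M, IsCompact (fq ⁻¹' {m}) := by
    intro m
    obtain ⟨x, rfl⟩ := hrep m
    · have : fq ⁻¹' {(show M from ⟦x⟧)} = (fun h => x * h⁻¹) '' H := by
        ext y
        simp only [mem_preimage, mem_singleton_iff, mem_image]
        constructor
        · intro h
          have hyx : y⁻¹ * x ∈ H := Quotient.exact h
          refine ⟨y⁻¹ * x, hyx, ?_⟩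
          group
        · rintro ⟨h, hh, rfl⟩
          apply Quotient.sound
          show (x * h⁻¹)⁻¹ * x ∈ H
          have : (x * h⁻¹)⁻¹ * x = h := by group
          rw [this]
          exact hh
      rw [this]
      exact hHcomp.image ((continuous_mul_left x).comp continuous_inv)
  refine ⟨paracompact_of_perfect hfc hfcl hfs hffib, M, mM, fq, hfc, hfcl, hfs, hffib⟩

theorem feathered_engine {G : Type u} [TopologicalSpace G] [Group G] [IsTopologicalGroup G]
    (V : ℕ → Set G) (hVo : ∀ n, IsOpen (V n)) (hV1 : ∀ n, (1 : G) ∈ V n)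
    (hVsym : ∀ n, (V n)⁻¹ = V n) (hVsq : ∀ n, V (n + 1) * V (n + 1) ⊆ V n)
    (hVanti : ∀ n, V (n + 1) ⊆ V n)
    (hHcomp : IsCompact (⋂ n, V n))
    (hbase : ∀ u : Set G, IsOpen u → (⋂ n, V n) ⊆ u → ∃ n, V n ⊆ u) :
    IsParacompactPSpace G := by
  classical
  set H : Set G := ⋂ n, V n with hHdef
  have hanti : ∀ {m n : ℕ}, m ≤ n → V n ⊆ V m := by
    intro m n hmn
    induction hmn with
    | refl => exact subset_rfl
    | step h ih => exact (hVanti _).trans ih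
  have hH1 : (1 : G) ∈ H := mem_iInter.2 fun n => hV1 n
  have hHsubV : ∀ n, H ⊆ V n := fun n => iInter_subset _ n
  have hHmul : ∀ x ∈ H, ∀ y ∈ H, x * y ∈ H := by
    intro x hx y hy
    refine mem_iInter.2 fun n => ?_
    exact hVsq n (mul_mem_mul (mem_iInter.1 hx (n + 1)) (mem_iInter.1 hy (n + 1)))
  have hHinv : ∀ x ∈ H, x⁻¹ ∈ H := by
    intro x hx
    refine mem_iInter.2 fun n => ?_
    rw [← hVsym n]
    exact inv_mem_inv.mpr (mem_iInter.1 hx n)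
  have hmemV_inv : ∀ {n : ℕ} {x : G}, x ∈ V n → x⁻¹ ∈ V n := by
    intro n x hx
    rw [← hVsym n]; exact inv_mem_inv.mpr hx
  -- the entourages
  set E : ℕ → Set (G × G) := fun n => {p : G × G | p.1⁻¹ * p.2 ∈ V n} with hEdef
  have hEanti : ∀ {m n : ℕ}, m ≤ n → E n ⊆ E m := fun hmn _ hp => hanti hmn hp
  set F : Filter (G × G) := ⨅ n, 𝓟 (E n) with hFdef
  have hdir : Directed (· ≥ ·) fun n => 𝓟 (E n) := by
    intro m n
    exact ⟨max m n, principal_mono.2 (hEanti (le_max_left m n)),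
      principal_mono.2 (hEanti (le_max_right m n))⟩
  have hFB : F.HasBasis (fun _ : ℕ => True) E := by
    rw [hFdef]
    exact hasBasis_iInf_principal (fun m n => ⟨max m n, hEanti (le_max_left m n), hEanti (le_max_right m n)⟩)
  have hEmemF : ∀ n, E n ∈ F := fun n => hFB.mem_of_mem trivial
  -- the uniform space structure
  let Ucore : UniformSpace.Core G :=
    { uniformity := F
      refl := by
        refine le_iInf fun n => le_principal_iff.2 ?_
        refine mem_principal.2 ?_
        rintro ⟨x, y⟩ (rfl : x = y)
        show x⁻¹ * x ∈ V n
        simpa using hV1 n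
      symm := by
        refine le_iInf fun n => le_principal_iff.2 ?_
        refine mem_map.2 (mem_of_superset (hEmemF n) ?_)
        rintro ⟨x, y⟩ hxy
        show y⁻¹ * x ∈ V n
        have : (x⁻¹ * y)⁻¹ ∈ V n := hmemV_inv hxy
        simpa using this
      comp := by
        refine le_iInf fun n => le_principal_iff.2 ?_
        refine mem_of_superset (mem_lift' (hEmemF (n + 1))) ?_
        rintro ⟨x, z⟩ ⟨y, hxy, hyz⟩
        show x⁻¹ * z ∈ V n
        have : (x⁻¹ * y) * (y⁻¹ * z) ∈ V n := hVsq n (mul_mem_mul hxy hyz)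
        simpa [mul_assoc] using this }
  let U : UniformSpace G := UniformSpace.ofCore Ucore
  have hUuni : 𝓤[U] = F := rfl
  have cg : (𝓤[U]).IsCountablyGenerated := by
    rw [hUuni]
    exact hFB.isCountablyGenerated
  -- ball basis for the nhds of the uniform topology
  have hnhdsU : ∀ x : G, (@nhds G U.toTopologicalSpace x).HasBasis (fun _ : ℕ => True)
      (fun n => {y : G | x⁻¹ * y ∈ V n}) := by
    intro x
    have := @nhds_eq_comap_uniformity G U x
    rw [this]
    exact hFB.comap (Prod.mk x)
  -- the uniform topology is coarser than the group topology
  have hballo : ∀ (x : G) (n : ℕ), IsOpen {y : G | x⁻¹ * y ∈ V n} := by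
    intro x n
    have : {y : G | x⁻¹ * y ∈ V n} = (fun y => x⁻¹ * y) ⁻¹' (V n) := rfl
    rw [this]
    exact (hVo n).preimage (continuous_const.mul continuous_id)
  have hcoarse : ∀ s : Set G, IsOpen[U.toTopologicalSpace] s → IsOpen s := by
    intro s hs
    rw [isOpen_iff_forall_mem_open]
    intro x hx
    have hsnhds : s ∈ @nhds G U.toTopologicalSpace x :=
      (@IsOpen.mem_nhds G U.toTopologicalSpace x s) hs hx
    obtain ⟨n, -, hn⟩ := (hnhdsU x).mem_iff.1 hsnhds
    exact ⟨{y : G | x⁻¹ * y ∈ V n}, hn, hballo x n, by simp [hV1 n]⟩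
  -- inseparability in the uniform topology
  have hclosure : ∀ x y : G, (x ∈ @closure G U.toTopologicalSpace {y}) ↔ x⁻¹ * y ∈ H := by
    intro x y
    rw [@mem_closure_singleton_basis G U.toTopologicalSpace x y _ (hnhdsU x)]
    constructor
    · intro h
      exact mem_iInter.2 fun n => h n
    · intro h n
      exact mem_iInter.1 h n
  have hinsep : ∀ x y : G, (@Inseparable G U.toTopologicalSpace x y) ↔ x⁻¹ * y ∈ H := by
    intro x y
    rw [@inseparable_iff_mem_closure G U.toTopologicalSpace x y]
    constructor
    · rintro ⟨h1, -⟩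
      exact hclosure x y |>.1 h1
    · intro h
      refine ⟨(hclosure x y).2 h, (hclosure y x).2 ?_⟩
      have := hHinv _ h
      simpa using this
  -- pseudometric induced by the uniformity
  have hHcomp' : IsCompact H := hHcomp
  let pm : PseudoMetricSpace G := @UniformSpace.pseudoMetricSpace G U cg
  let d : G → G → ℝ := @Dist.dist G pm.toDist
  have hdself : ∀ x, d x x = 0 := pm.dist_self
  have hdcomm : ∀ x y, d x y = d y x := pm.dist_comm
  have hdtri : ∀ x y z, d x z ≤ d x y + d y z := pm.dist_triangle
  have hd0 : ∀ x y, d x y = 0 ↔ x⁻¹ * y ∈ H := by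
    intro x y
    have hmi := @Metric.inseparable_iff G pm x y
    exact hmi.symm.trans (hinsep x y)
  have hballopen : ∀ (x : G) (ε : ℝ), IsOpen {y : G | d x y < ε} := by
    intro x ε
    have hset : {y : G | d x y < ε} = @Metric.ball G pm x ε := by
      ext y
      show d x y < ε ↔ d y x < ε
      rw [hdcomm]
    rw [hset]
    exact hcoarse _ (@Metric.isOpen_ball G pm x ε)
  have hsepball : ∀ (x : G) (n : ℕ), ∃ ε > 0, ∀ y, d x y < ε → x⁻¹ * y ∈ V n := by
    intro x n
    have hmem : {y : G | x⁻¹ * y ∈ V n} ∈ @nhds G U.toTopologicalSpace x :=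
      (hnhdsU x).mem_of_mem trivial
    have hb := @Metric.nhds_basis_ball G pm x
    obtain ⟨ε, hε, hsub⟩ := hb.mem_iff.1 hmem
    refine ⟨ε, hε, fun y hy => ?_⟩
    have : y ∈ @Metric.ball G pm x ε := by
      show d y x < ε
      rw [hdcomm]
      exact hy
    exact hsub this
  have hsep : ∀ T : Set G, IsClosed T → ∀ x, x ∉ T * H →
      ∃ ε > 0, ∀ y, d x y < ε → y ∉ T * H := by
    intro T hT x hx
    have hTH : IsClosed (T * H) := hT.mul_right_of_isCompact hHcomp'
    have hxH : IsCompact ((fun h => x * h) '' H) := hHcomp'.image (continuous_mul_left x)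
    have hdisj : ((fun h => x * h) '' H) ⊆ (T * H)ᶜ := by
      rintro - ⟨h, hh, rfl⟩ hmem
      obtain ⟨t, ht, h', hh', heq⟩ := hmem
      apply hx
      refine ⟨t, ht, h' * h⁻¹, hHmul _ hh' _ (hHinv _ hh), ?_⟩
      have heq' : t * h' = x * h := heq
      show t * (h' * h⁻¹) = x
      rw [← mul_assoc, heq']
      group
    obtain ⟨t, htmem, hts⟩ := compact_open_separated_mul_right hxH hTH.isOpen_compl hdisj
    obtain ⟨t', ht'sub, ht'o, ht'1⟩ := mem_nhds_iff.1 htmem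
    have hHt' : IsOpen (H * t') := ht'o.mul_left
    have hHsubHt' : (⋂ n, V n) ⊆ H * t' := fun h hh => ⟨h, hh, 1, ht'1, mul_one h⟩
    obtain ⟨n, hn⟩ := hbase (H * t') hHt' hHsubHt'
    obtain ⟨ε, hε, hballn⟩ := hsepball x n
    refine ⟨ε, hε, ?_⟩
    intro y hy hymem
    have h1 : x⁻¹ * y ∈ V n := hballn y hy
    obtain ⟨h, hh, sᵥ, hsv, heq⟩ := hn h1
    have hy' : y ∈ ((fun h => x * h) '' H) * t := by
      refine ⟨x * h, ⟨h, hh, rfl⟩, sᵥ, ht'sub hsv, ?_⟩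
      have heq' : h * sᵥ = x⁻¹ * y := heq
      show (x * h) * sᵥ = y
      rw [mul_assoc, heq']
      group
    exact (hts hy') hymem
  exact quotient_metric_pspace H hH1 hHmul hHinv hHcomp' d hdself hdcomm hdtri hd0 hballopen hsep

theorem remainder_union_countable_pseudocharacter
    {G bG : Type u} [TopologicalSpace G] [Group G] [IsTopologicalGroup G]
    [TopologicalSpace bG] [CompactSpace bG] [T2Space bG]
    (e : G → bG) (he : Topology.IsEmbedding e) (hd : DenseRange e)
    (hnlc : ¬ LocallyCompactSpace G)
    (Y₁ Y₂ : Set bG) (hY : (Set.range e)ᶜ = Y₁ ∪ Y₂)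
    -- `Y₁` and `Y₂` have countable pseudocharacter (as subspaces)
    (h₁ : ∀ y ∈ Y₁, ∃ U : ℕ → Set bG, (∀ n, IsOpen (U n)) ∧ Y₁ ∩ ⋂ n, U n = {y})
    (h₂ : ∀ y ∈ Y₂, ∃ U : ℕ → Set bG, (∀ n, IsOpen (U n)) ∧ Y₂ ∩ ⋂ n, U n = {y})
    -- at most one of `Y₁`, `Y₂` is dense in `bG`
    (hdense : ¬ (Dense Y₁ ∧ Dense Y₂)) :
    IsParacompactPSpace G ∨
      ∃ y : ↥(Set.range e)ᶜ, (𝓝 y).IsCountablyGenerated := by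
  classical
  -- The remainder is dense, since `G` is nowhere locally compact.
  have hYdense : Dense (Set.range e)ᶜ := by
    by_contra hnd
    rw [dense_iff_inter_open] at hnd
    push_neg at hnd
    obtain ⟨Uo, hUo, hUne, hUY⟩ := hnd
    have hUsub : Uo ⊆ Set.range e := by
      intro x hx
      by_contra hxr
      have : x ∈ Uo ∩ (Set.range e)ᶜ := ⟨hx, hxr⟩
      rw [hUY] at this
      exact this
    apply hnlc
    obtain ⟨x0, hx0⟩ := hUne
    obtain ⟨g0, hg0⟩ := hUsub hx0
    subst hg0
    constructor
    intro g n hn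
    let φ : G ≃ₜ G := Homeomorph.mulRight (g0⁻¹ * g)
    have hφ : φ g0 = g := by
      show g0 * (g0⁻¹ * g) = g
      group
    have hn0 : φ ⁻¹' n ∈ 𝓝 g0 := by
      have : n ∈ 𝓝 (φ g0) := by rwa [hφ]
      exact φ.continuous.continuousAt.preimage_mem_nhds this
    have hcomap : 𝓝 g0 = Filter.comap e (𝓝 (e g0)) := he.toIsInducing.nhds_eq_comap g0
    rw [hcomap] at hn0
    obtain ⟨n', hn', hn'sub⟩ := Filter.mem_comap.1 hn0
    obtain ⟨K, hK1, hK2, hK3⟩ := LocallyCompactSpace.local_compact_nhds (e g0) (n' ∩ Uo)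
      (Filter.inter_mem hn' (hUo.mem_nhds hx0))
    have hKrange : K ⊆ Set.range e := fun z hz => hUsub (hK2 hz).2
    have hKcomp : IsCompact (e ⁻¹' K) := he.toIsInducing.isCompact_preimage' hK3 hKrange
    refine ⟨φ '' (e ⁻¹' K), ?_, ?_, hKcomp.image φ.continuous⟩
    · have h1 : e ⁻¹' K ∈ 𝓝 g0 := by
        rw [hcomap]
        exact Filter.preimage_mem_comap hK1
      have himg : φ '' (e ⁻¹' K) = φ.symm ⁻¹' (e ⁻¹' K) := by
        ext w
        constructor
        · rintro ⟨v, hv, rfl⟩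
          simpa using hv
        · intro hw
          exact ⟨φ.symm w, hw, φ.apply_symm_apply w⟩
      rw [himg]
      have h2 : φ.symm g = g0 := by
        rw [← hφ]
        exact φ.symm_apply_apply g0
      apply φ.symm.continuous.continuousAt.preimage_mem_nhds
      rwa [h2]
    · intro w hw
      obtain ⟨v, hv, rfl⟩ := hw
      have hv' : v ∈ e ⁻¹' n' := (hK2 hv).1
      exact hn'sub hv'
  -- extract a Gδ point of the remainder
  have hGdelta : ∃ y ∈ (Set.range e)ᶜ, ∃ Vs : ℕ → Set bG,
      (∀ n, IsOpen (Vs n)) ∧ (∀ n, y ∈ Vs n) ∧ ((Set.range e)ᶜ ∩ ⋂ n, Vs n) = {y} := by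
    rcases not_and_or.1 hdense with hnd | hnd
    · -- Y₁ is not dense; use h₂
      obtain ⟨x, hx⟩ := (ne_univ_iff_exists_notMem _).1 (fun hcl => hnd (dense_iff_closure_eq.2 hcl))
      have hWo : IsOpen (closure Y₁)ᶜ := isClosed_closure.isOpen_compl
      have hWne : ((closure Y₁)ᶜ).Nonempty := ⟨x, hx⟩
      obtain ⟨y, hy1, hy2⟩ := hYdense.inter_open_nonempty _ hWo hWne
      have hyY2 : y ∈ Y₂ := by
        have : y ∈ Y₁ ∪ Y₂ := hY ▸ hy2
        rcases this with h | h
        · exact absurd (subset_closure h) hy1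
        · exact h
      obtain ⟨Us, hUso, hUseq⟩ := h₂ y hyY2
      have hyU : ∀ n, y ∈ Us n := by
        intro n
        have : y ∈ Y₂ ∩ ⋂ n, Us n := by rw [hUseq]; rfl
        exact mem_iInter.1 this.2 n
      refine ⟨y, hy2, fun n => (closure Y₁)ᶜ ∩ Us n, fun n => hWo.inter (hUso n), fun n => ⟨hy1, hyU n⟩, ?_⟩
      apply Subset.antisymm
      · rintro z ⟨hz1, hz2⟩
        have hz3 : ∀ n, z ∈ (closure Y₁)ᶜ ∩ Us n := fun n => mem_iInter.1 hz2 n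
        have hzY2 : z ∈ Y₂ := by
          have : z ∈ Y₁ ∪ Y₂ := hY ▸ hz1
          rcases this with h | h
          · exact absurd (subset_closure h) (hz3 0).1
          · exact h
        have : z ∈ Y₂ ∩ ⋂ n, Us n := ⟨hzY2, mem_iInter.2 fun n => (hz3 n).2⟩
        rw [hUseq] at this
        exact this
      · intro z hz
        rw [mem_singleton_iff] at hz
        subst hz
        exact ⟨hy2, mem_iInter.2 fun n => ⟨hy1, hyU n⟩⟩
    · -- Y₂ is not dense; use h₁
      obtain ⟨x, hx⟩ := (ne_univ_iff_exists_notMem _).1 (fun hcl => hnd (dense_iff_closure_eq.2 hcl))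
      have hWo : IsOpen (closure Y₂)ᶜ := isClosed_closure.isOpen_compl
      have hWne : ((closure Y₂)ᶜ).Nonempty := ⟨x, hx⟩
      obtain ⟨y, hy1, hy2⟩ := hYdense.inter_open_nonempty _ hWo hWne
      have hyY1 : y ∈ Y₁ := by
        have : y ∈ Y₁ ∪ Y₂ := hY ▸ hy2
        rcases this with h | h
        · exact h
        · exact absurd (subset_closure h) hy1
      obtain ⟨Us, hUso, hUseq⟩ := h₁ y hyY1
      have hyU : ∀ n, y ∈ Us n := by
        intro n
        have : y ∈ Y₁ ∩ ⋂ n, Us n := by rw [hUseq]; rfl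
        exact mem_iInter.1 this.2 n
      refine ⟨y, hy2, fun n => (closure Y₂)ᶜ ∩ Us n, fun n => hWo.inter (hUso n), fun n => ⟨hy1, hyU n⟩, ?_⟩
      apply Subset.antisymm
      · rintro z ⟨hz1, hz2⟩
        have hz3 : ∀ n, z ∈ (closure Y₂)ᶜ ∩ Us n := fun n => mem_iInter.1 hz2 n
        have hzY1 : z ∈ Y₁ := by
          have : z ∈ Y₁ ∪ Y₂ := hY ▸ hz1
          rcases this with h | h
          · exact h
          · exact absurd (subset_closure h) (hz3 0).1
        have : z ∈ Y₁ ∩ ⋂ n, Us n := ⟨hzY1, mem_iInter.2 fun n => (hz3 n).2⟩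
        rw [hUseq] at this
        exact this
      · intro z hz
        rw [mem_singleton_iff] at hz
        subst hz
        exact ⟨hy2, mem_iInter.2 fun n => ⟨hy1, hyU n⟩⟩
  obtain ⟨y, hyY, Vs, hVso, hVsy, hVseq⟩ := hGdelta
  -- bG is a normal space
  have hnormal : NormalSpace bG := by infer_instance
  -- construct the decreasing sequence of open neighborhoods of y
  have hstep : ∀ s : Set bG, IsOpen s → y ∈ s → ∀ n : ℕ,
      ∃ w : Set bG, (IsOpen w ∧ y ∈ w) ∧ closure w ⊆ s ∩ Vs (n + 1) := by
    intro s hs hys n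
    have h2 : IsOpen (s ∩ Vs (n + 1)) := hs.inter (hVso _)
    have h3 : ({y} : Set bG) ⊆ s ∩ Vs (n + 1) :=
      singleton_subset_iff.2 ⟨hys, hVsy (n + 1)⟩
    obtain ⟨w, hw1, hw2, hw3⟩ := normal_exists_closure_subset isClosed_singleton h2 h3
    exact ⟨w, ⟨hw1, hw2 rfl⟩, hw3⟩
  choose! Fw hFw1 hFw2 using hstep
  let Ws : ℕ → Set bG := fun n => Nat.rec (Vs 0) (fun k s => Fw s k) n
  have hWinv : ∀ n, IsOpen (Ws n) ∧ y ∈ Ws n := by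
    intro n
    induction n with
    | zero => exact ⟨hVso 0, hVsy 0⟩
    | succ k ih => exact hFw1 (Ws k) ih.1 ih.2 k
  have hWcl : ∀ n, closure (Ws (n + 1)) ⊆ Ws n ∩ Vs (n + 1) :=
    fun n => hFw2 (Ws n) (hWinv n).1 (hWinv n).2 n
  set K : Set bG := ⋂ n, closure (Ws (n + 1)) with hKdef
  have hKsub : ∀ n, K ⊆ Ws n := fun n =>
    (iInter_subset _ n).trans ((hWcl n).trans inter_subset_left)
  have hKV : ∀ n, K ⊆ Vs n := by
    intro n
    cases n with
    | zero => exact hKsub 0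
    | succ m => exact (iInter_subset _ m).trans ((hWcl m).trans inter_subset_right)
  have hyK : y ∈ K := mem_iInter.2 fun n => subset_closure (hWinv (n + 1)).2
  have hKcomp : IsCompact K := (isClosed_iInter fun n => isClosed_closure).isCompact
  have hKY : (Set.range e)ᶜ ∩ K = {y} := by
    apply Subset.antisymm
    · rintro z ⟨hz1, hz2⟩
      have : z ∈ (Set.range e)ᶜ ∩ ⋂ n, Vs n := ⟨hz1, mem_iInter.2 fun n => hKV n hz2⟩
      rw [hVseq] at this
      exact this
    · intro z hz
      rw [mem_singleton_iff] at hz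
      subst hz
      exact ⟨hyY, hyK⟩
  have hKanti : ∀ n, closure (Ws (n + 1 + 1)) ⊆ closure (Ws (n + 1)) :=
    fun n => ((hWcl (n + 1)).trans inter_subset_left).trans subset_closure
  have hKbase : ∀ U' : Set bG, IsOpen U' → K ⊆ U' → ∃ n, closure (Ws (n + 1)) ⊆ U' := by
    intro U' hU' hKU'
    exact nested_compact_base (fun n => (isClosed_closure).isCompact)
      (fun n => isClosed_closure) hKanti hU' hKU'
  by_cases hKy : K ⊆ {y}
  · -- RIGHT branch: `y` has countable character in bG
    have hbasisy : (𝓝 y).HasBasis (fun _ : ℕ => True) (fun n => Ws n) := by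
      constructor
      intro s
      constructor
      · intro hs
        obtain ⟨U', hU'sub, hU'o, hyU'⟩ := mem_nhds_iff.1 hs
        obtain ⟨n, hn⟩ := hKbase U' hU'o (fun z hz => by
          have := hKy hz
          rw [mem_singleton_iff] at this
          rw [this]
          exact hyU')
        refine ⟨n + 1, trivial, ?_⟩
        exact (subset_closure.trans hn).trans hU'sub
      · rintro ⟨n, -, hn⟩
        exact Filter.mem_of_superset ((hWinv n).1.mem_nhds (hWinv n).2) hn
    have hcg : (𝓝 y).IsCountablyGenerated := hbasisy.isCountablyGenerated
    refine Or.inr ⟨⟨y, hyY⟩, ?_⟩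
    have : 𝓝 (⟨y, hyY⟩ : ↥(Set.range e)ᶜ) = Filter.comap (Subtype.val) (𝓝 y) :=
      nhds_subtype _ _
    rw [this]
    haveI := hcg
    exact Filter.comap.isCountablyGenerated _ _
  · -- LEFT branch: build a compact subset of G with countable character
    obtain ⟨z, hzK, hzy⟩ := not_subset.1 hKy
    have hzrange : z ∈ Set.range e := by
      by_contra hzr
      have : z ∈ (Set.range e)ᶜ ∩ K := ⟨hzr, hzK⟩
      rw [hKY] at this
      exact hzy this
    -- Urysohn function separating z from y
    have hdisj : Disjoint ({z} : Set bG) ({y} : Set bG) := by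
      rw [disjoint_singleton]
      intro h
      exact hzy (by rw [h]; rfl)
    obtain ⟨f, hf0, hf1, hf01⟩ := exists_continuous_zero_one_of_isClosed
      isClosed_singleton isClosed_singleton hdisj
    set C : Set bG := K ∩ f ⁻¹' {0} with hCdef
    have hCcomp : IsCompact C := hKcomp.inter_right (isClosed_singleton.preimage f.continuous)
    have hzC : z ∈ C := ⟨hzK, by
      rw [mem_preimage, mem_singleton_iff]
      exact hf0 rfl⟩
    have hCrange : C ⊆ Set.range e := by
      intro c hc
      by_contra hcr
      have : c ∈ (Set.range e)ᶜ ∩ K := ⟨hcr, hc.1⟩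
      rw [hKY] at this
      rw [mem_singleton_iff] at this
      subst this
      have h1 : f c = 1 := hf1 rfl
      have h0 : f c = 0 := by
        have := hc.2
        rwa [mem_preimage, mem_singleton_iff] at this
      rw [h0] at h1
      norm_num at h1
  -- the Gδ representation of C
    set Qs : ℕ → Set bG := fun n => Ws (n + 1) ∩ f ⁻¹' (Iio ((1 : ℝ) / (n + 1))) with hQdef
    have hQo : ∀ n, IsOpen (Qs n) := fun n =>
      (hWinv (n + 1)).1.inter (isOpen_Iio.preimage f.continuous)
    have hCQ : ∀ n, C ⊆ Qs n := by
      intro n c hc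
      refine ⟨hKsub (n + 1) hc.1, ?_⟩
      rw [mem_preimage, mem_Iio]
      have h0 : f c = 0 := by
        have := hc.2
        rwa [mem_preimage, mem_singleton_iff] at this
      rw [h0]
      positivity
    have hQC : (⋂ n, Qs n) ⊆ C := by
      intro w hw
      have hw1 : ∀ n, w ∈ Ws (n + 1) := fun n => (mem_iInter.1 hw n).1
      have hw2 : ∀ n : ℕ, f w < 1 / (n + 1) := by
        intro n
        have := (mem_iInter.1 hw n).2
        rwa [mem_preimage, mem_Iio] at this
      have hwK : w ∈ K := mem_iInter.2 fun n => subset_closure (hw1 n)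
      refine ⟨hwK, ?_⟩
      rw [mem_preimage, mem_singleton_iff]
      by_contra hne
      have hpos : 0 < f w := lt_of_le_of_ne (hf01 w).1 (Ne.symm hne)
      obtain ⟨n, hn⟩ := exists_nat_one_div_lt hpos
      exact absurd (hw2 n) (not_lt.2 (le_of_lt hn))
    -- sequence of open sets shrinking to C
    have hstepB : ∀ s : Set bG, IsOpen s → C ⊆ s → ∀ n : ℕ,
        ∃ w : Set bG, (IsOpen w ∧ C ⊆ w) ∧ closure w ⊆ s ∩ Qs n := by
      intro s hs hCs n
      have h2 : IsOpen (s ∩ Qs n) := hs.inter (hQo n)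
      obtain ⟨w, hw1, hw2, hw3⟩ := normal_exists_closure_subset hCcomp.isClosed h2
        (subset_inter hCs (hCQ n))
      exact ⟨w, ⟨hw1, hw2⟩, hw3⟩
    choose! FB hFB1 hFB2 using hstepB
    let Bs : ℕ → Set bG := fun n => Nat.rec univ (fun k s => FB s k) n
    have hBinv : ∀ n, IsOpen (Bs n) ∧ C ⊆ Bs n := by
      intro n
      induction n with
      | zero => exact ⟨isOpen_univ, subset_univ _⟩
      | succ k ih => exact hFB1 (Bs k) ih.1 ih.2 k
    have hBcl : ∀ n, closure (Bs (n + 1)) ⊆ Bs n ∩ Qs n :=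
      fun n => hFB2 (Bs n) (hBinv n).1 (hBinv n).2 n
    have hBinter : (⋂ n, closure (Bs (n + 1))) = C := by
      apply Subset.antisymm
      · intro w hw
        apply hQC
        exact mem_iInter.2 fun n => ((hBcl n) (mem_iInter.1 hw n)).2
      · intro c hc
        exact mem_iInter.2 fun n => subset_closure ((hBinv (n + 1)).2 hc)
    have hBanti : ∀ n, closure (Bs (n + 1 + 1)) ⊆ closure (Bs (n + 1)) :=
      fun n => ((hBcl (n + 1)).trans inter_subset_left).trans subset_closure
    have hBbase : ∀ U' : Set bG, IsOpen U' → C ⊆ U' → ∃ n, closure (Bs (n + 1)) ⊆ U' := by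
      intro U' hU' hCU'
      apply nested_compact_base (fun n => (isClosed_closure).isCompact)
        (fun n => isClosed_closure) hBanti hU'
      rw [hBinter]
      exact hCU'
    -- transfer to G
    set C' : Set G := e ⁻¹' C with hC'def
    have hC'comp : IsCompact C' := he.toIsInducing.isCompact_preimage' hCcomp hCrange
    obtain ⟨gz, hgz⟩ := hzrange
    have hgzC' : gz ∈ C' := by
      rw [hC'def, mem_preimage, hgz]
      exact hzC
    set Us : ℕ → Set G := fun n => e ⁻¹' (Bs (n + 1)) with hUsdef
    have hUso : ∀ n, IsOpen (Us n) := fun n => (hBinv (n + 1)).1.preimage he.continuous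
    have hUsC : ∀ n, C' ⊆ Us n := fun n => preimage_mono (hBinv (n + 1)).2
    have hUsanti : ∀ n, Us (n + 1) ⊆ Us n :=
      fun n => preimage_mono (subset_closure.trans ((hBcl (n + 1)).trans inter_subset_left))
    have hUsanti' : ∀ {m n : ℕ}, m ≤ n → Us n ⊆ Us m := by
      intro m n hmn
      induction hmn with
      | refl => exact subset_rfl
      | step h ih => exact (hUsanti _).trans ih
    have hUsbase : ∀ u : Set G, IsOpen u → C' ⊆ u → ∃ n, Us n ⊆ u := by
      intro u hu hCu
      obtain ⟨u', hu'o, hu'pre⟩ := he.toIsInducing.isOpen_iff.1 hu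
      have hCu' : C ⊆ u' := by
        intro c hc
        obtain ⟨g', hg'⟩ := hCrange hc
        have : g' ∈ C' := by rw [hC'def, mem_preimage, hg']; exact hc
        have := hCu this
        rw [← hu'pre] at this
        rwa [← hg']
      obtain ⟨n, hn⟩ := hBbase u' hu'o hCu'
      refine ⟨n, ?_⟩
      rw [← hu'pre]
      exact preimage_mono (subset_closure.trans hn)
    have hUsinter : (⋂ n, Us n) = C' := by
      apply Subset.antisymm
      · intro g' hg'
        rw [hC'def, mem_preimage, ← hBinter]
        exact mem_iInter.2 fun n => subset_closure (mem_iInter.1 hg' n)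
      · intro g' hg'
        exact mem_iInter.2 fun n => hUsC n hg'
    -- the sequence of symmetric open neighborhoods of 1
    have hstepV : ∀ S : Set G, IsOpen S → (1 : G) ∈ S → ∀ n : ℕ,
        ∃ T : Set G, (IsOpen T ∧ (1 : G) ∈ T ∧ T⁻¹ = T) ∧
          T * T ⊆ S ∧ C' * T ⊆ Us n ∧ T ⊆ S := by
      intro S hS h1S n
      obtain ⟨W1, hW1o, hW11, hW1sq⟩ := exists_open_nhds_one_mul_subset (hS.mem_nhds h1S)
      obtain ⟨W2, hW2mem, hW2sub⟩ := compact_open_separated_mul_right hC'comp (hUso n) (hUsC n)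
      obtain ⟨W3, hW3sub, hW3o, hW31⟩ := mem_nhds_iff.1 hW2mem
      refine ⟨(W1 ∩ W3) ∩ (W1 ∩ W3)⁻¹,
        ⟨((hW1o.inter hW3o).inter (hW1o.inter hW3o).inv),
         ⟨⟨hW11, hW31⟩, by simpa using ⟨hW11, hW31⟩⟩, by simp [inter_comm]⟩, ?_, ?_, ?_⟩
      · intro w hw
        obtain ⟨a, ha, b, hb, rfl⟩ := hw
        exact hW1sq (mul_mem_mul ha.1.1 hb.1.1)
      · intro w hw
        obtain ⟨a, ha, b, hb, rfl⟩ := hw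
        exact hW2sub (mul_mem_mul ha (hW3sub hb.1.2))
      · intro w hw
        exact hW1sq (by
          have : w = w * 1 := by group
          rw [this]
          exact mul_mem_mul hw.1.1 hW11)
    choose! FV hFV1 hFV2 using hstepV
    let Vg : ℕ → Set G := fun n => Nat.rec (FV univ 0) (fun k s => FV s (k + 1)) n
    have hVginv : ∀ n, IsOpen (Vg n) ∧ (1 : G) ∈ Vg n ∧ (Vg n)⁻¹ = Vg n := by
      intro n
      induction n with
      | zero => exact (hFV1 univ isOpen_univ (mem_univ 1) 0)
      | succ k ih => exact hFV1 (Vg k) ih.1 ih.2.1 (k + 1)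
    have hVgsq : ∀ n, Vg (n + 1) * Vg (n + 1) ⊆ Vg n :=
      fun n => (hFV2 (Vg n) (hVginv n).1 (hVginv n).2.1 (n + 1)).1
    have hVgC : ∀ n, C' * Vg n ⊆ Us n := by
      intro n
      cases n with
      | zero => exact (hFV2 univ isOpen_univ (mem_univ 1) 0).2.1
      | succ k => exact (hFV2 (Vg k) (hVginv k).1 (hVginv k).2.1 (k + 1)).2.1
    have hVganti : ∀ n, Vg (n + 1) ⊆ Vg n :=
      fun n => (hFV2 (Vg n) (hVginv n).1 (hVginv n).2.1 (n + 1)).2.2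
    have hVganti' : ∀ {m n : ℕ}, m ≤ n → Vg n ⊆ Vg m := by
      intro m n hmn
      induction hmn with
      | refl => exact subset_rfl
      | step h ih => exact (hVganti _).trans ih
    -- closure of V (n+1) is inside V n
    have hclV : ∀ n, closure (Vg (n + 1)) ⊆ Vg n := by
      intro n c hc
      have hopen : IsOpen ((fun v => c * v) '' Vg (n + 1)) :=
        (isOpenMap_mul_left c) _ (hVginv (n + 1)).1
      have hcmem : c ∈ (fun v => c * v) '' Vg (n + 1) :=
        ⟨1, (hVginv (n + 1)).2.1, mul_one c⟩
      obtain ⟨w, hw1, hw2⟩ := mem_closure_iff.1 hc _ hopen hcmem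
      obtain ⟨v, hv, rfl⟩ := hw1
      have hvinv : v⁻¹ ∈ Vg (n + 1) := by
        rw [← (hVginv (n + 1)).2.2]
        simpa using hv
      have : (c * v) * v⁻¹ ∈ Vg (n + 1) * Vg (n + 1) := mul_mem_mul hw2 hvinv
      have heq : (c * v) * v⁻¹ = c := by group
      rw [heq] at this
      exact hVgsq n this
    -- H is compact
    have hHcl : IsClosed (⋂ n, Vg n) := by
      have : (⋂ n, Vg n) = ⋂ n, closure (Vg (n + 1)) := by
        apply Subset.antisymm
        · intro h hh
          exact mem_iInter.2 fun n => subset_closure (mem_iInter.1 hh (n + 1))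
        · intro h hh
          exact mem_iInter.2 fun n => hclV n (mem_iInter.1 hh n)
      rw [this]
      exact isClosed_iInter fun n => isClosed_closure
    have hHsubim : (⋂ n, Vg n) ⊆ (fun w => gz⁻¹ * w) '' C' := by
      intro h hh
      have : gz * h ∈ C' := by
        rw [← hUsinter]
        refine mem_iInter.2 fun n => ?_
        exact hVgC n (mul_mem_mul hgzC' (mem_iInter.1 hh n))
      refine ⟨gz * h, this, by group⟩
    have hHcomp : IsCompact (⋂ n, Vg n) :=
      IsCompact.of_isClosed_subset (hC'comp.image (continuous_mul_left gz⁻¹)) hHcl hHsubim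
    -- the countable character of H: the cluster point argument
    have hVgbase : ∀ u : Set G, IsOpen u → (⋂ n, Vg n) ⊆ u → ∃ n, Vg n ⊆ u := by
      intro u hu hHu
      refine Classical.byContradiction fun hcon => ?_
      push_neg at hcon
      have hex : ∀ n, ∃ x, x ∈ Vg n ∧ x ∉ u := fun n => not_subset.1 (hcon n)
      choose xs hxs1 hxs2 using hex
      set seq : ℕ → bG := fun k => e (gz * xs k) with hseqdef
      haveI : (Filter.map seq Filter.atTop).NeBot := Filter.map_neBot
      obtain ⟨zc, hzc⟩ := exists_clusterPt_of_compactSpace (Filter.map seq Filter.atTop)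
      have hzcB : ∀ m, zc ∈ closure (Bs (m + 1)) := by
        intro m
        have hev : ∀ k, k ≥ m → seq k ∈ Bs (m + 1) := by
          intro k hk
          have h1 : xs k ∈ Vg m := hVganti' hk (hxs1 k)
          have h2 : gz * xs k ∈ Us m := hVgC m (mul_mem_mul hgzC' h1)
          exact h2
        have hle : Filter.map seq Filter.atTop ≤ 𝓟 (Bs (m + 1)) := by
          rw [Filter.le_principal_iff, Filter.mem_map]
          exact Filter.mem_of_superset (Filter.mem_atTop m) (fun k hk => hev k hk)
        exact mem_closure_iff_clusterPt.2 (hzc.mono hle)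
      have hzcC : zc ∈ C := by
        rw [← hBinter]
        exact mem_iInter.2 hzcB
      obtain ⟨gc, hgc⟩ := hCrange hzcC
      have hgcC' : gc ∈ C' := by
        rw [hC'def, mem_preimage, hgc]
        exact hzcC
      -- transfer the cluster point to G
      have h1 : Filter.map e (𝓝 gc) = 𝓝 zc ⊓ 𝓟 (Set.range e) := by
        rw [he.toIsInducing.nhds_eq_comap, Filter.map_comap, hgc]
      have h2 : Filter.map e (Filter.map (fun k => gz * xs k) Filter.atTop)
          = Filter.map seq Filter.atTop := by
        rw [Filter.map_map]
        rfl
      have h3 : Filter.map seq Filter.atTop ≤ 𝓟 (Set.range e) := by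
        rw [Filter.le_principal_iff, Filter.mem_map]
        exact Filter.univ_mem' (fun k => ⟨gz * xs k, rfl⟩)
      have hclG : ClusterPt gc (Filter.map (fun k => gz * xs k) Filter.atTop) := by
        have hne : (Filter.map e (𝓝 gc ⊓ Filter.map (fun k => gz * xs k) Filter.atTop)).NeBot := by
          rw [Filter.map_inf he.injective, h1, h2]
          have heqf : (𝓝 zc ⊓ 𝓟 (Set.range e)) ⊓ Filter.map seq Filter.atTop
              = 𝓝 zc ⊓ Filter.map seq Filter.atTop := by
            apply le_antisymm
            · exact inf_le_inf_right _ inf_le_left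
            · exact le_inf (le_inf inf_le_left (le_trans inf_le_right h3)) inf_le_right
          rw [heqf]
          exact hzc
        refine Filter.neBot_iff.2 ?_
        intro hb
        rw [hb] at hne
        simp at hne
        exact (Filter.neBot_iff.1 hne) rfl
      have hclG2 : ClusterPt (gz⁻¹ * gc) (Filter.map xs Filter.atTop) := by
        have hcont : ContinuousAt (fun w : G => gz⁻¹ * w) gc := (continuous_mul_left gz⁻¹).continuousAt
        have hmcp : MapClusterPt gc Filter.atTop (fun k => gz * xs k) := hclG
        have hres := hmcp.continuousAt_comp hcont
        have heqfun : ((fun w : G => gz⁻¹ * w) ∘ (fun k => gz * xs k)) = xs := by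
          funext k
          show gz⁻¹ * (gz * xs k) = xs k
          group
        rw [heqfun] at hres
        exact hres
      have hgH : gz⁻¹ * gc ∈ ⋂ n, Vg n := by
        refine mem_iInter.2 fun n => ?_
        have hev : Filter.map xs Filter.atTop ≤ 𝓟 (Vg (n + 1)) := by
          rw [Filter.le_principal_iff, Filter.mem_map]
          exact Filter.mem_of_superset (Filter.mem_atTop (n + 1)) (fun k hk => hVganti' hk (hxs1 k))
        have : gz⁻¹ * gc ∈ closure (Vg (n + 1)) := mem_closure_iff_clusterPt.2 (hclG2.mono hev)
        exact hclV n this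
      have humem : u ∈ 𝓝 (gz⁻¹ * gc) := hu.mem_nhds (hHu hgH)
      have huc : uᶜ ∈ Filter.map xs Filter.atTop := by
        rw [Filter.mem_map]
        exact Filter.univ_mem' (fun k => hxs2 k)
      have hbot : u ∩ uᶜ ∈ 𝓝 (gz⁻¹ * gc) ⊓ Filter.map xs Filter.atTop :=
        Filter.inter_mem (Filter.mem_inf_of_left humem) (Filter.mem_inf_of_right huc)
      have hempty : (∅ : Set G) ∈ 𝓝 (gz⁻¹ * gc) ⊓ Filter.map xs Filter.atTop := by
        simpa using hbot
      exact hclG2.ne (Filter.empty_mem_iff_bot.1 hempty)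
    exact Or.inl (feathered_engine Vg (fun n => (hVginv n).1) (fun n => (hVginv n).2.1)
      (fun n => (hVginv n).2.2) hVgsq hVganti hHcomp hVgbase)
end

section
/- Let X be a Hausdorff p-space with Hausdorff compactification bX in which every compact subset of the remainder bX \ X is metrizable. Then there exists a Gδ-subset Y of bX containing X such that bX is first-countable at every point of Y \ X. -/
open Topology Set

/-- In a compact Hausdorff space, the neighborhood filter of a `Gδ` point is
countably generated. -/
lemma isCountablyGenerated_nhds_of_isGδ_singleton {Z : Type*} [TopologicalSpace Z]
    [CompactSpace Z] [T2Space Z] {y : Z} (h : IsGδ {y}) :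
    (𝓝 y).IsCountablyGenerated := by
  obtain ⟨W, hWopen, hW⟩ := isGδ_iff_eq_iInter_nat.mp h
  have hyW : ∀ n, y ∈ W n := fun n => by
    have : y ∈ ⋂ n, W n := hW ▸ rfl
    exact mem_iInter.mp this n
  -- closed neighborhoods inside the `W n`
  have hD : ∀ n, ∃ D, D ∈ 𝓝 y ∧ IsClosed D ∧ D ⊆ W n := fun n =>
    exists_mem_nhds_isClosed_subset ((hWopen n).mem_nhds (hyW n))
  choose D hDnhds hDclosed hDsub using hD
  set E : ℕ → Set Z := fun n => ⋂ i ∈ Finset.range (n + 1), D i with hE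
  have hEnhds : ∀ n, E n ∈ 𝓝 y := fun n =>
    (Filter.biInter_finset_mem _).mpr fun i _ => hDnhds i
  have hEclosed : ∀ n, IsClosed (E n) := fun n =>
    isClosed_biInter fun i _ => hDclosed i
  have hEanti : ∀ n, E (n + 1) ⊆ E n := by
    intro n z hz
    simp only [hE, mem_iInter] at hz ⊢
    intro i hi
    exact hz i (Finset.mem_range.mpr ((Finset.mem_range.mp hi).trans (Nat.lt_succ_self _)))
  have hEy : ∀ n, y ∈ E n := fun n => mem_of_mem_nhds (hEnhds n)
  have hEsingleton : (⋂ n, E n) = {y} := by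
    apply Subset.antisymm
    · intro z hz
      rw [hW]
      refine mem_iInter.mpr fun n => ?_
      have : z ∈ E n := mem_iInter.mp hz n
      have : z ∈ D n := by
        simp only [hE, mem_iInter] at this
        exact this n (Finset.mem_range.mpr (Nat.lt_succ_self n))
      exact hDsub n this
    · intro z hz
      rw [mem_singleton_iff] at hz
      subst hz
      exact mem_iInter.mpr hEy
  -- the `E n` form a basis of `𝓝 y`
  have hbasis : (𝓝 y).HasBasis (fun _ : ℕ => True) E := by
    rw [Filter.hasBasis_iff]
    intro t
    constructor
    · intro ht
      obtain ⟨V, hVt, hVopen, hyV⟩ := mem_nhds_iff.mp ht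
      by_contra hcon
      push_neg at hcon
      have hne : ∀ n, (E n ∩ Vᶜ).Nonempty := by
        intro n
        obtain ⟨z, hz1, hz2⟩ :=
          not_subset.mp (fun hsub => hcon n trivial (hsub.trans hVt))
        exact ⟨z, hz1, hz2⟩
      have := IsCompact.nonempty_iInter_of_sequence_nonempty_isCompact_isClosed
        (fun n => E n ∩ Vᶜ)
        (fun n => inter_subset_inter_left _ (hEanti n)) hne
        (((hEclosed 0).inter hVopen.isClosed_compl).isCompact)
        (fun n => (hEclosed n).inter hVopen.isClosed_compl)
      obtain ⟨z, hz⟩ := this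
      have hz1 : z ∈ ⋂ n, E n := mem_iInter.mpr fun n => (mem_iInter.mp hz n).1
      have hz2 : z ∈ Vᶜ := (mem_iInter.mp hz 0).2
      rw [hEsingleton, mem_singleton_iff] at hz1
      exact hz2 (hz1 ▸ hyV)
    · rintro ⟨n, -, hn⟩
      exact Filter.mem_of_superset (hEnhds n) hn
  exact hbasis.isCountablyGenerated

theorem pSpace_remainder_compact_metrizable
    {X bX : Type*} [TopologicalSpace X] [T2Space X]
    [TopologicalSpace bX] [CompactSpace bX] [T2Space bX]
    (e : X → bX) (he : Topology.IsEmbedding e) (hd : DenseRange e)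
    -- `X` is a p-space, witnessed in the compactification `bX`
    (hp : ∃ 𝒰 : ℕ → Set (Set bX), (∀ n, ∀ U ∈ 𝒰 n, IsOpen U) ∧
      (∀ n, Set.range e ⊆ ⋃₀ 𝒰 n) ∧
      ∀ x ∈ Set.range e, (⋂ n, star' x (𝒰 n)) ⊆ Set.range e)
    -- every compact subset of the remainder is metrizable
    (hm : ∀ K : Set bX, K ⊆ (Set.range e)ᶜ → IsCompact K →
      TopologicalSpace.MetrizableSpace ↥K) :
    ∃ Y : Set bX, (∃ U : ℕ → Set bX, (∀ n, IsOpen (U n)) ∧ Y = ⋂ n, U n) ∧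
      Set.range e ⊆ Y ∧
      ∀ y ∈ Y \ Set.range e, (𝓝 y).IsCountablyGenerated := by
  obtain ⟨𝒰, hopen, hcover, hstar⟩ := hp
  refine ⟨⋂ n, ⋃₀ 𝒰 n, ⟨fun n => ⋃₀ 𝒰 n, fun n => isOpen_sUnion (hopen n), rfl⟩,
    fun x hx => mem_iInter.mpr fun n => hcover n hx, ?_⟩
  rintro y ⟨hyY, hyX⟩
  -- `y` lies in every `star' y (𝒰 n)`
  have hystar : ∀ n, y ∈ star' y (𝒰 n) := by
    intro n
    obtain ⟨U, hU, hyU⟩ := mem_iInter.mp hyY n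
    exact ⟨U, ⟨hU, hyU⟩, hyU⟩
  have hstaropen : ∀ n, IsOpen (star' y (𝒰 n)) :=
    fun n => isOpen_sUnion fun U hU => hopen n U hU.1
  -- the Gδ set `G = ⋂ n, star' y (𝒰 n)` is disjoint from `range e`
  have hGdisj : (⋂ n, star' y (𝒰 n)) ⊆ (Set.range e)ᶜ := by
    intro z hz hze
    apply hyX
    apply hstar z hze
    refine mem_iInter.mpr fun n => ?_
    obtain ⟨U, ⟨hU, hyU⟩, hzU⟩ := mem_iInter.mp hz n
    exact ⟨U, ⟨hU, hzU⟩, hyU⟩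
  -- choose closed neighborhoods `C n ⊆ star' y (𝒰 n)`
  have hC : ∀ n, ∃ C, C ∈ 𝓝 y ∧ IsClosed C ∧ C ⊆ star' y (𝒰 n) := fun n =>
    exists_mem_nhds_isClosed_subset ((hstaropen n).mem_nhds (hystar n))
  choose C hCnhds hCclosed hCsub using hC
  set K : Set bX := ⋂ n, C n with hK
  have hKclosed : IsClosed K := isClosed_iInter hCclosed
  have hKcompact : IsCompact K := hKclosed.isCompact
  have hKsub : K ⊆ (Set.range e)ᶜ := fun z hz =>
    hGdisj (mem_iInter.mpr fun n => hCsub n (mem_iInter.mp hz n))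
  have hyK : y ∈ K := mem_iInter.mpr fun n => mem_of_mem_nhds (hCnhds n)
  -- `K` is compact metrizable, hence `{y}` is Gδ in `K`
  haveI : TopologicalSpace.MetrizableSpace ↥K := hm K hKsub hKcompact
  have hGδK : IsGδ ({⟨y, hyK⟩} : Set ↥K) := IsGδ.singleton _
  obtain ⟨f, hfopen, hf⟩ := isGδ_iff_eq_iInter_nat.mp hGδK
  have hO : ∀ n, ∃ O : Set bX, IsOpen O ∧ f n = Subtype.val ⁻¹' O := by
    intro n
    obtain ⟨O, hOopen, hOeq⟩ := isOpen_induced_iff.mp (hfopen n)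
    exact ⟨O, hOopen, hOeq.symm⟩
  choose O hOopen hOeq using hO
  -- `{y}` is Gδ in `bX`
  have hGδy : IsGδ ({y} : Set bX) := by
    have heq : ({y} : Set bX) = ⋂ n, (interior (C n) ∩ O n) := by
      apply Subset.antisymm
      · rw [singleton_subset_iff]
        refine mem_iInter.mpr fun n => ⟨mem_interior_iff_mem_nhds.mpr (hCnhds n), ?_⟩
        have : (⟨y, hyK⟩ : ↥K) ∈ ⋂ n, f n := hf ▸ rfl
        have := mem_iInter.mp this n
        rw [hOeq n] at this
        exact this
      · intro z hz
        have hzK : z ∈ K := mem_iInter.mpr fun n =>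
          interior_subset (mem_iInter.mp hz n).1
        have : (⟨z, hzK⟩ : ↥K) ∈ ⋂ n, f n := by
          refine mem_iInter.mpr fun n => ?_
          rw [hOeq n]
          exact (mem_iInter.mp hz n).2
        rw [← hf, mem_singleton_iff] at this
        have : z = y := congrArg Subtype.val this
        simp [this]
    rw [heq]
    exact IsGδ.iInter_of_isOpen fun n => (isOpen_interior.inter (hOopen n))
  exact isCountablyGenerated_nhds_of_isGδ_singleton hGδy
end

section
/- Every paracompact Hausdorff space with a base of countable order is metrizable. -/
open Topology Set

/-- `X` has a base of countable order. -/
def HasBCO (X : Type*) [TopologicalSpace X] : Prop :=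
  ∃ ℬ : ℕ → Set (Set X),
    (∀ n, ∀ B ∈ ℬ n, IsOpen B) ∧
    (∀ n, ∀ U : Set X, IsOpen U → ∀ x ∈ U, ∃ B ∈ ℬ n, x ∈ B ∧ B ⊆ U) ∧
    ∀ (x : X) (B : ℕ → Set X), (∀ n, B n ∈ ℬ n) → (∀ n, x ∈ B n) → Antitone B →
      ∀ V : Set X, IsOpen V → x ∈ V → ∃ n, B n ⊆ V


open Filter
open scoped Uniformity

/-- Barycentric refinement: in a paracompact T2 space, every open cover `𝒞` admits an open
cover `𝒲` such that for every point `x`, the star of `x` w.r.t. `𝒲` is contained in a member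
of `𝒞`. -/
theorem bary_refinement {X : Type*} [TopologicalSpace X] [T2Space X] [ParacompactSpace X]
    (𝒞 : Set (Set X)) (ho : ∀ C ∈ 𝒞, IsOpen C) (hc : ∀ x : X, ∃ C ∈ 𝒞, x ∈ C) :
    ∃ 𝒲 : Set (Set X), (∀ W ∈ 𝒲, IsOpen W) ∧ (∀ x : X, ∃ W ∈ 𝒲, x ∈ W) ∧
      ∀ x : X, ∃ C ∈ 𝒞, ∀ W ∈ 𝒲, x ∈ W → W ⊆ C := by
  classical
  obtain ⟨v, vo, vU, vlf, vsub⟩ := precise_refinement (fun C : 𝒞 => (C : Set X))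
    (fun C => ho C C.2)
    (by
      rw [eq_univ_iff_forall]
      intro x
      obtain ⟨C, hC, hx⟩ := hc x
      exact mem_iUnion.2 ⟨⟨C, hC⟩, hx⟩)
  obtain ⟨w, wU, wo, wcl⟩ := exists_subset_iUnion_closure_subset isClosed_univ vo
    (fun x _ => vlf.point_finite x) (by rw [vU])
  have clf : LocallyFinite fun i => closure (w i) := vlf.subset wcl
  set I : X → Set 𝒞 := fun x => {i | x ∈ closure (w i)} with hI
  have Ifin : ∀ x, (I x).Finite := fun x => clf.point_finite x
  set N : X → Set X := fun x =>
    (⋂ i ∈ I x, v i) ∩ (⋃ i ∈ (I x)ᶜ, closure (w i))ᶜ with hN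
  have hNopen : ∀ x, IsOpen (N x) := by
    intro x
    apply IsOpen.inter
    · exact (Ifin x).isOpen_biInter fun i _ => vo i
    · rw [isOpen_compl_iff, biUnion_eq_iUnion]
      exact (clf.comp_injective Subtype.val_injective).isClosed_iUnion fun i => isClosed_closure
  have hNmem : ∀ x, x ∈ N x := by
    intro x
    constructor
    · exact mem_biInter fun i hi => wcl i hi
    · intro hx
      obtain ⟨i, hi, hxi⟩ := mem_iUnion₂.1 hx
      exact hi hxi
  refine ⟨range N, ?_, ?_, ?_⟩
  · rintro W ⟨y, rfl⟩
    exact hNopen y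
  · exact fun x => ⟨N x, mem_range_self x, hNmem x⟩
  · intro x
    have : x ∈ ⋃ i, w i := wU (mem_univ x)
    obtain ⟨i₀, hxw⟩ := mem_iUnion.1 this
    refine ⟨(i₀ : Set X), i₀.2, ?_⟩
    rintro W ⟨y, rfl⟩ hxW
    have hx0 : x ∈ closure (w i₀) := subset_closure hxw
    have hi₀ : i₀ ∈ I y := by
      by_contra hne
      exact hxW.2 (mem_iUnion₂.2 ⟨i₀, hne, hx0⟩)
    exact fun z hz => vsub i₀ (mem_iInter₂.1 hz.1 i₀ hi₀)

theorem paracompact_BCO_metrizable {X : Type*} [TopologicalSpace X] [T2Space X]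
    [ParacompactSpace X] (h : HasBCO X) : TopologicalSpace.MetrizableSpace X := by
  classical
  obtain ⟨ℬ, hBo, hBb, hBCO⟩ := h
  -- good covers
  set P : Set (Set X) → Prop := fun 𝒰 => (∀ U ∈ 𝒰, IsOpen U) ∧ ∀ x : X, ∃ U ∈ 𝒰, x ∈ U with hP
  set L : ℕ → Set (Set X) → Set (Set X) → Prop := fun n 𝒰 𝒲 =>
    ∀ x : X, ∃ B ∈ ℬ n, (∃ U ∈ 𝒰, B ⊆ U) ∧ ∀ W ∈ 𝒲, x ∈ W → W ⊆ B with hL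
  have step : ∀ (n : ℕ) (𝒰 : {S : Set (Set X) // P S}), ∃ 𝒲 : {S : Set (Set X) // P S},
      L n (𝒰 : Set (Set X)) (𝒲 : Set (Set X)) := by
    rintro n ⟨𝒰, hUo, hUc⟩
    have hco : ∀ C ∈ {B | B ∈ ℬ n ∧ ∃ U ∈ 𝒰, B ⊆ U}, IsOpen C := fun C hC => hBo n C hC.1
    have hcc : ∀ x : X, ∃ C ∈ {B | B ∈ ℬ n ∧ ∃ U ∈ 𝒰, B ⊆ U}, x ∈ C := by
      intro x
      obtain ⟨U, hU, hxU⟩ := hUc x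
      obtain ⟨B, hB, hxB, hBU⟩ := hBb n U (hUo U hU) x hxU
      exact ⟨B, ⟨hB, U, hU, hBU⟩, hxB⟩
    obtain ⟨𝒲, hWo, hWc, hWb⟩ := bary_refinement _ hco hcc
    refine ⟨⟨𝒲, hWo, hWc⟩, fun x => ?_⟩
    obtain ⟨C, ⟨hC, hCU⟩, hbar⟩ := hWb x
    exact ⟨C, hC, hCU, hbar⟩
  have Puniv : P {univ} := ⟨fun U hU => hU ▸ isOpen_univ, fun x => ⟨univ, rfl, trivial⟩⟩
  set g : ℕ → {S : Set (Set X) // P S} := fun n =>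
    Nat.rec ⟨{univ}, Puniv⟩ (fun k prev => Classical.choose (step k prev)) n with hg
  have hlink : ∀ n, L n ((g n : Set (Set X))) ((g (n + 1) : Set (Set X))) := fun n =>
    Classical.choose_spec (step n (g n))
  -- the covers used for entourages
  set 𝒰 : ℕ → Set (Set X) := fun n => (g (n + 1) : Set (Set X)) with h𝒰
  have hUo : ∀ n, ∀ U ∈ 𝒰 n, IsOpen U := fun n => (g (n + 1)).2.1
  have hUc : ∀ n, ∀ x : X, ∃ U ∈ 𝒰 n, x ∈ U := fun n => (g (n + 1)).2.2
  -- entourages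
  set V : ℕ → Set (X × X) := fun n => {p : X × X | ∃ U ∈ 𝒰 n, p.1 ∈ U ∧ p.2 ∈ U} with hV
  have hVrefl : ∀ n (x : X), (x, x) ∈ V n := by
    intro n x
    obtain ⟨U, hU, hx⟩ := hUc n x
    exact ⟨U, hU, hx, hx⟩
  have hVsymm : ∀ n (p : X × X), p ∈ V n → p.swap ∈ V n := by
    rintro n p ⟨U, hU, h1, h2⟩
    exact ⟨U, hU, h2, h1⟩
  have hVcomp : ∀ n, SetRel.comp (V (n + 1)) (V (n + 1)) ⊆ V n := by
    rintro n ⟨a, c⟩ ⟨b, ⟨U₁, hU₁, ha, hb₁⟩, ⟨U₂, hU₂, hb₂, hc⟩⟩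
    obtain ⟨B, _, ⟨U, hU, hBU⟩, hstar⟩ := hlink (n + 1) b
    exact ⟨U, hU, hBU (hstar U₁ hU₁ hb₁ ha), hBU (hstar U₂ hU₂ hb₂ hc)⟩
  have hVanti : Antitone V := by
    refine antitone_nat_of_succ_le fun n p hp => ?_
    exact hVcomp n ⟨p.1, hVrefl (n + 1) p.1, hp⟩
  set F : Filter (X × X) := ⨅ n, 𝓟 (V n) with hF
  have hFb : F.HasBasis (fun _ : ℕ => True) V :=
    hasBasis_iInf_principal (hVanti.directed_ge)
  -- the chain of basis elements at a point
  have hchain : ∀ x : X, ∀ n : ℕ, ∃ B ∈ ℬ n, x ∈ B ∧ (∀ U ∈ 𝒰 n, x ∈ U → U ⊆ B) ∧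
      ∃ U ∈ (g n : Set (Set X)), x ∈ U ∧ B ⊆ U := by
    intro x n
    obtain ⟨B, hB, ⟨U, hU, hBU⟩, hstar⟩ := hlink n x
    obtain ⟨W, hW, hxW⟩ := hUc n x
    have hxB : x ∈ B := hstar W hW hxW hxW
    exact ⟨B, hB, hxB, hstar, U, hU, hBU hxB, hBU⟩
  -- key: entourage balls shrink inside open sets
  have hshrink : ∀ (x : X) (W : Set X), IsOpen W → x ∈ W →
      ∃ n, {y | (x, y) ∈ V n} ⊆ W := by
    intro x W hWo hxW
    choose B hB1 hB2 hB3 hB4 using hchain x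
    have hanti : Antitone B := by
      refine antitone_nat_of_succ_le fun n => ?_
      obtain ⟨U, hU, hxU, hBU⟩ := hB4 (n + 1)
      exact hBU.trans (hB3 n U hU hxU)
    obtain ⟨n, hn⟩ := hBCO x B hB1 hB2 hanti W hWo hxW
    refine ⟨n, fun y hy => ?_⟩
    obtain ⟨U, hU, hxU, hyU⟩ := hy
    exact hn (hB3 n U hU hxU hyU)
  -- build the uniform space
  set core : UniformSpace.Core X := UniformSpace.Core.mk' F
    (fun r hr x => by
      obtain ⟨n, -, hsub⟩ := hFb.mem_iff.1 hr
      exact hsub (hVrefl n x))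
    (fun r hr => by
      obtain ⟨n, -, hsub⟩ := hFb.mem_iff.1 hr
      exact hFb.mem_iff.2 ⟨n, trivial, fun p hp => hsub (hVsymm n p hp)⟩)
    (fun r hr => by
      obtain ⟨n, -, hsub⟩ := hFb.mem_iff.1 hr
      exact ⟨V (n + 1), hFb.mem_iff.2 ⟨n + 1, trivial, subset_rfl⟩,
        ((hVcomp n).trans hsub)⟩) with hcore
  have hnhds : ∀ x : X, 𝓝 x = comap (Prod.mk x) F := by
    intro x
    have hcb : (comap (Prod.mk x) F).HasBasis (fun _ : ℕ => True)
        (fun n => Prod.mk x ⁻¹' V n) := hFb.comap _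
    refine le_antisymm (hcb.ge_iff.2 fun n _ => ?_) ?_
    · obtain ⟨U, hU, hxU⟩ := hUc n x
      exact mem_of_superset ((hUo n U hU).mem_nhds hxU)
        (fun y hy => ⟨U, hU, hxU, hy⟩)
    · intro s hs
      obtain ⟨W, hWs, hWo, hxW⟩ := mem_nhds_iff.1 hs
      obtain ⟨n, hn⟩ := hshrink x W hWo hxW
      exact hcb.mem_iff.2 ⟨n, trivial, fun y hy => hWs (hn hy)⟩
  have htop : ‹TopologicalSpace X› = core.toTopologicalSpace := by
    refine TopologicalSpace.ext_nhds fun x => ?_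
    rw [core.nhds_toTopologicalSpace]
    exact hnhds x
  letI u : UniformSpace X := UniformSpace.ofCoreEq core _ htop
  haveI : (𝓤 X).IsCountablyGenerated := by
    have : 𝓤 X = F := rfl
    rw [this]
    exact hFb.isCountablyGenerated
  exact UniformSpace.metrizableSpace
end

section
/- Let Y be a dense subspace of a compact Hausdorff space bG, let (bₙ) be a sequence of points of Y converging to a point c, and suppose bG is first-countable at each bₙ with countable neighborhood base ηₙ. Then ⋃ₙ ηₙ contains a countable local π-base at c in bG; consequently any dense subspace containing c has countable π-character at c. -/
open Topology Set

theorem pi_base_at_cluster_point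
    {bG : Type*} [TopologicalSpace bG] [CompactSpace bG] [T2Space bG]
    (Y : Set bG) (hY : Dense Y)
    (b : ℕ → bG) (hb : ∀ n, b n ∈ Y)
    (c : bG)
    -- `c` is a cluster point of `(bₙ)`: every neighborhood contains infinitely many `bₙ`
    (hc : ∀ V ∈ 𝓝 c, {n : ℕ | b n ∈ V}.Infinite)
    (η : ℕ → Set (Set bG)) (hηc : ∀ n, (η n).Countable)
    -- each `ηₙ` is a neighborhood base at `bₙ` consisting of open sets
    (hηo : ∀ n, ∀ W ∈ η n, IsOpen W ∧ b n ∈ W)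
    (hηb : ∀ n, ∀ V : Set bG, IsOpen V → b n ∈ V → ∃ W ∈ η n, W ⊆ V) :
    (∃ 𝒰 : Set (Set bG), 𝒰 ⊆ ⋃ n, η n ∧ 𝒰.Countable ∧
      (∀ W ∈ 𝒰, IsOpen W ∧ W.Nonempty) ∧
      ∀ V : Set bG, IsOpen V → c ∈ V → ∃ W ∈ 𝒰, W ⊆ V) ∧
    ∀ (D : Set bG) (hD : Dense D) (hcD : c ∈ D),
      ∃ 𝒱 : Set (Set ↥D), 𝒱.Countable ∧ (∀ W ∈ 𝒱, IsOpen W ∧ W.Nonempty) ∧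
        ∀ V : Set ↥D, IsOpen V → (⟨c, hcD⟩ : ↥D) ∈ V → ∃ W ∈ 𝒱, W ⊆ V := by
  set 𝒰 : Set (Set bG) := ⋃ n, η n with h𝒰
  have hcnt : 𝒰.Countable := countable_iUnion hηc
  have hop : ∀ W ∈ 𝒰, IsOpen W ∧ W.Nonempty := by
    intro W hW
    rcases mem_iUnion.1 hW with ⟨n, hn⟩
    exact ⟨(hηo n W hn).1, ⟨b n, (hηo n W hn).2⟩⟩
  have hbase : ∀ V : Set bG, IsOpen V → c ∈ V → ∃ W ∈ 𝒰, W ⊆ V := by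
    intro V hV hcV
    have hVn : V ∈ 𝓝 c := hV.mem_nhds hcV
    obtain ⟨n, hn⟩ := (hc V hVn).nonempty
    obtain ⟨W, hW, hWV⟩ := hηb n V hV hn
    exact ⟨W, mem_iUnion.2 ⟨n, hW⟩, hWV⟩
  refine ⟨⟨𝒰, subset_rfl, hcnt, hop, hbase⟩, ?_⟩
  intro D hD hcD
  refine ⟨(fun W => Subtype.val ⁻¹' W) '' 𝒰, hcnt.image _, ?_, ?_⟩
  · rintro _ ⟨W, hW, rfl⟩
    obtain ⟨hWo, hWne⟩ := hop W hW
    refine ⟨hWo.preimage continuous_subtype_val, ?_⟩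
    obtain ⟨x, hx⟩ := hD.inter_open_nonempty W hWo hWne
    exact ⟨⟨x, hx.2⟩, hx.1⟩
  · intro V hV hcV
    obtain ⟨U, hU, rfl⟩ := hV
    obtain ⟨W, hW, hWU⟩ := hbase U hU hcV
    exact ⟨_, mem_image_of_mem _ hW, fun x hx => hWU hx⟩
end

section
/- Let X be a Hausdorff topological group in which some point has countable π-character. Then X is first-countable, and hence metrizable. -/
open Topology Set
open scoped Pointwise Uniformity

theorem group_countable_pi_character_metrizable
    {X : Type*} [TopologicalSpace X] [Group X] [IsTopologicalGroup X] [T2Space X]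
    (h : ∃ x : X, ∃ 𝒰 : Set (Set X), 𝒰.Countable ∧
      (∀ U ∈ 𝒰, IsOpen U ∧ U.Nonempty) ∧
      ∀ V : Set X, IsOpen V → x ∈ V → ∃ U ∈ 𝒰, U ⊆ V) :
    FirstCountableTopology X ∧ TopologicalSpace.MetrizableSpace X := by
  obtain ⟨x, 𝒰, hcount, hopen, hbase⟩ := h
  -- The sets U⁻¹ * U for U ∈ 𝒰 form a countable neighborhood basis at 1.
  have hbasis : (𝓝 (1 : X)).HasBasis (fun U : 𝒰 => True)
      (fun U => (U : Set X)⁻¹ * (U : Set X)) := by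
    constructor
    intro V
    constructor
    · intro hV
      -- use continuity of (a, b) ↦ a⁻¹ * b at (x, x)
      have hc : ContinuousAt (fun p : X × X => p.1⁻¹ * p.2) (x, x) :=
        ((continuous_inv.comp continuous_fst).mul continuous_snd).continuousAt
      have hxx : (fun p : X × X => p.1⁻¹ * p.2) (x, x) = 1 := by simp
      have hpre : (fun p : X × X => p.1⁻¹ * p.2) ⁻¹' V ∈ 𝓝 (x, x) := by
        apply hc
        rw [hxx]; exact hV
      rw [nhds_prod_eq] at hpre
      obtain ⟨W, hW, hWsub⟩ := Filter.mem_prod_self_iff.1 hpre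
      obtain ⟨U, hU𝒰, hUsub⟩ := hbase (interior W) isOpen_interior (mem_interior_iff_mem_nhds.2 hW)
      refine ⟨⟨U, hU𝒰⟩, trivial, ?_⟩
      rintro z ⟨a, ha, b, hb, rfl⟩
      have ha' : a⁻¹ ∈ W := interior_subset (hUsub (by simpa using ha))
      have hb' : b ∈ W := interior_subset (hUsub hb)
      have := hWsub (Set.mk_mem_prod ha' hb')
      simpa using this
    · rintro ⟨⟨U, hU𝒰⟩, -, hsub⟩
      obtain ⟨hUopen, u, hu⟩ := hopen U hU𝒰
      have hopen' : IsOpen ((U : Set X)⁻¹ * U) := hUopen.mul_left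
      have h1 : (1 : X) ∈ (U : Set X)⁻¹ * U :=
        ⟨u⁻¹, by simpa using hu, u, hu, by simp⟩
      exact Filter.mem_of_superset (hopen'.mem_nhds h1) hsub
  haveI : Countable 𝒰 := hcount.to_subtype
  haveI hgen : (𝓝 (1 : X)).IsCountablyGenerated := hbasis.isCountablyGenerated
  haveI hfc : FirstCountableTopology X := by
    constructor
    intro y
    rw [← nhds_translation_div y]
    exact Filter.comap.isCountablyGenerated _ _
  refine ⟨hfc, ?_⟩
  letI u : UniformSpace X := IsTopologicalGroup.rightUniformSpace X
  haveI : (𝓤 X).IsCountablyGenerated := by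
    rw [uniformity_eq_comap_nhds_one']
    exact Filter.comap.isCountablyGenerated _ _
  exact UniformSpace.metrizableSpace
end
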